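/- arXiv:2407.07508 — 4 statements merged into one kernel-verified Lean document; each statement's English description precedes it below -/
import Mathlib

section
/- Let (Φ_n)_{n≥0} be a sequence of monic complex polynomials with deg Φ_n = n and Φ_0 = 1. Then the following are equivalent: (i) there exists a complex sequence (α_n)_{n≥0} with |α_n| < 1 for all n such that Φ_{n+1}(z) = z·Φ_n(z) - conj(α_n)·Φ_n^*(z) for all n ≥ 0 (Szegő's recurrence); (ii) there exists a unique linear functional L on the complex vector space V of Laurent polynomials such that L(1) = 1 and L(Φ_m(z)·Φ̄_n(1/z)) = κ_n·δ_{m,n} for all m, n ≥ 0, where each κ_n is a real number with κ_n > 0. -/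
open Polynomial LaurentPolynomial Finset

noncomputable section

/-- Extension of the Verblunsky coefficients to integer indices, with the
convention `α₋₁ = -1` (and junk value `-1` for all negative indices). -/
def az (α : ℕ → ℂ) (k : ℤ) : ℂ := if 0 ≤ k then α k.toNat else -1

/-- The monic OPUC `Φ_n` defined by Szegő's recurrence
`Φ_{n+1}(z) = z·Φ_n(z) - conj(α_n)·Φ_n^*(z)`, where `Φ_n^*` is the reverse
polynomial `reflect n (map conj Φ_n)`. -/
def szego (α : ℕ → ℂ) : ℕ → Polynomial ℂ
  | 0 => 1
  | n + 1 =>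
      Polynomial.X * szego α n -
        Polynomial.C ((starRingEnd ℂ) (α n)) *
          Polynomial.reflect n ((szego α n).map (starRingEnd ℂ))

/-- `f̄(1/z)` as a Laurent polynomial, for a polynomial `f`. -/
def polyBarInv (f : Polynomial ℂ) : LaurentPolynomial ℂ :=
  f.sum fun k c => LaurentPolynomial.C ((starRingEnd ℂ) c) * LaurentPolynomial.T (-(k : ℤ))

/-- `f̄(1/z)` as a Laurent polynomial, for a Laurent polynomial `f`. -/
def laurentBarInv (f : LaurentPolynomial ℂ) : LaurentPolynomial ℂ :=
  Finsupp.sum f.coeff fun k c => LaurentPolynomial.C ((starRingEnd ℂ) c) * LaurentPolynomial.T (-k)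

/-- The generalized moment `μ_{n,r,s} = ⟨Φ_s(z), z^n·Φ_r(z)⟩ / ⟨Φ_s(z), Φ_s(z)⟩`,
where `⟨f,g⟩ = L(f(z)·ḡ(1/z))` and `⟨Φ_s, Φ_s⟩ = ∏_{j<s} (1 - |α_j|²)`. -/
def genMom (L : LaurentPolynomial ℂ →ₗ[ℂ] ℂ) (α : ℕ → ℂ) (n : ℤ) (r s : ℕ) : ℂ :=
  L (Polynomial.toLaurent (szego α s) *
      laurentBarInv (LaurentPolynomial.T n * Polynomial.toLaurent (szego α r))) /
    ∏ j ∈ Finset.range s, ((1 - Complex.normSq (α j) : ℝ) : ℂ)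

/-- `IsLatticePath S p l q` : the list of steps `l`, starting at `p`, forms a lattice
path from `p` to `q` lying weakly above the x-axis, each step `st` taken from a
position `x` satisfying the (possibly position-dependent) step condition `S x st`. -/
def IsLatticePath (S : ℤ × ℤ → ℤ × ℤ → Prop) : ℤ × ℤ → List (ℤ × ℤ) → ℤ × ℤ → Prop
  | p, [], q => p = q ∧ 0 ≤ p.2
  | p, st :: rest, q => 0 ≤ p.2 ∧ S p st ∧ IsLatticePath S (p + st) rest q

/-- The weight of a path: the product of the weights of its steps, where the weight
of a step may depend on its starting position. -/
def pathWeight (w : ℤ × ℤ → ℤ × ℤ → ℂ) : ℤ × ℤ → List (ℤ × ℤ) → ℂ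
  | _, [] => 1
  | p, st :: rest => w p st * pathWeight w (p + st) rest

/-- Łukasiewicz steps: `(1, k)` with `k ≤ 1`. -/
def lukaStep (_p st : ℤ × ℤ) : Prop := st.1 = 1 ∧ st.2 ≤ 1

/-- Łukasiewicz step weights: an up-step has weight `1`, and a step
`(a,b) → (a+1,b-k)` (`0 ≤ k ≤ b`) has weight
`-α_b·conj(α_{b-k-1})·∏_{j=b-k}^{b-1} (1-|α_j|²)`. -/
def wtLstep (α : ℕ → ℂ) (p st : ℤ × ℤ) : ℂ :=
  if st.2 = 1 then 1
  else
    -(az α p.2) * (starRingEnd ℂ) (az α (p.2 + st.2 - 1)) *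
      ∏ j ∈ Finset.Ico (p.2 + st.2) p.2, ((1 - Complex.normSq (az α j) : ℝ) : ℂ)

/-- Gentle Motzkin steps: `(1,1)` (only at even `a+b`), `(1,0)`, `(1,-1)` (only at odd `a+b`). -/
def gentleStep (p st : ℤ × ℤ) : Prop :=
  (st = (1, 1) ∧ Even (p.1 + p.2)) ∨ st = (1, 0) ∨ (st = (1, -1) ∧ Odd (p.1 + p.2))

/-- Gentle Motzkin step weights. -/
def wtMstep (α : ℕ → ℂ) (p st : ℤ × ℤ) : ℂ :=
  if st = (1, 1) then 1
  else if st = (1, -1) then ((1 - Complex.normSq (az α (p.2 - 1)) : ℝ) : ℂ)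
  else if Even (p.1 + p.2) then az α p.2
  else -(starRingEnd ℂ) (az α (p.2 - 1))

/-- Schröder steps: `(1,1)`, `(1,0)`, `(0,-1)`. -/
def schStep (_p st : ℤ × ℤ) : Prop := st = (1, 1) ∨ st = (1, 0) ∨ st = (0, -1)

/-- Schröder step weights. -/
def wtSstep (α : ℕ → ℂ) (p st : ℤ × ℤ) : ℂ :=
  if st = (1, 1) then 1
  else if st = (1, 0) then -((starRingEnd ℂ) (az α (p.2 - 1)) / (starRingEnd ℂ) (az α p.2))
  else
    ((starRingEnd ℂ) (az α (p.2 - 2)) / (starRingEnd ℂ) (az α (p.2 - 1))) *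
      ((1 - Complex.normSq (az α (p.2 - 1)) : ℝ) : ℂ)


namespace VB
local notation "lbi" => laurentBarInv

lemma lbi_single (n : ℤ) (a : ℂ) :
    lbi (AddMonoidAlgebra.single n a) = AddMonoidAlgebra.single (-n) ((starRingEnd ℂ) a) := by
  rw [laurentBarInv, AddMonoidAlgebra.coeff_single, Finsupp.sum_single_index (by simp), ← single_eq_C_mul_T]

lemma lbi_add (f g : LaurentPolynomial ℂ) : lbi (f + g) = lbi f + lbi g := by
  unfold laurentBarInv
  rw [AddMonoidAlgebra.coeff_add]
  exact Finsupp.sum_add_index' (by simp) (by intro a b₁ b₂; simp [map_add, add_mul])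

lemma lbi_zero : lbi 0 = 0 := by simp [laurentBarInv]

lemma lbi_sum {ι : Type*} (s : Finset ι) (f : ι → LaurentPolynomial ℂ) :
    lbi (∑ i ∈ s, f i) = ∑ i ∈ s, lbi (f i) :=
  map_sum (AddMonoidHom.mk' lbi lbi_add) _ _

lemma lbi_sub (f g : LaurentPolynomial ℂ) : lbi (f - g) = lbi f - lbi g :=
  map_sub (AddMonoidHom.mk' lbi lbi_add) f g

lemma lbi_neg (f : LaurentPolynomial ℂ) : lbi (-f) = -lbi f :=
  map_neg (AddMonoidHom.mk' lbi lbi_add) f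

lemma lbi_mul (f g : LaurentPolynomial ℂ) : lbi (f * g) = lbi f * lbi g := by
  induction f using AddMonoidAlgebra.induction_linear with
  | zero => simp [lbi_zero]
  | add f₁ f₂ h₁ h₂ => rw [add_mul, lbi_add, lbi_add, h₁, h₂, add_mul]
  | single a b =>
    induction g using AddMonoidAlgebra.induction_linear with
    | zero => simp [lbi_zero]
    | add g₁ g₂ h₁ h₂ => rw [mul_add, lbi_add, lbi_add, h₁, h₂, mul_add]
    | single c d =>
      rw [AddMonoidAlgebra.single_mul_single, lbi_single, lbi_single, lbi_single,
        AddMonoidAlgebra.single_mul_single, neg_add, map_mul]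

lemma lbi_one : lbi 1 = 1 := by
  have : (1 : LaurentPolynomial ℂ) = AddMonoidAlgebra.single 0 1 := rfl
  rw [this, lbi_single]; simp

lemma lbi_T (n : ℤ) : lbi (T n) = T (-n) := by
  rw [show (T n : LaurentPolynomial ℂ) = AddMonoidAlgebra.single n 1 from rfl, lbi_single, map_one]
  rfl

lemma lbi_C (a : ℂ) :
    lbi (LaurentPolynomial.C a) = LaurentPolynomial.C ((starRingEnd ℂ) a) := by
  rw [show (LaurentPolynomial.C a : LaurentPolynomial ℂ) = AddMonoidAlgebra.single 0 a from rfl,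
    lbi_single]
  rfl

lemma lbi_lbi (f : LaurentPolynomial ℂ) : lbi (lbi f) = f := by
  induction f using AddMonoidAlgebra.induction_linear with
  | zero => simp [lbi_zero]
  | add f₁ f₂ h₁ h₂ => rw [lbi_add, lbi_add, h₁, h₂]
  | single a b => rw [lbi_single, lbi_single]; simp

lemma C_mul_eq_smul (a : ℂ) (f : LaurentPolynomial ℂ) : LaurentPolynomial.C a * f = a • f := by
  induction f using AddMonoidAlgebra.induction_linear with
  | zero => simp
  | add f₁ f₂ h₁ h₂ => rw [mul_add, h₁, h₂, smul_add]
  | single c d =>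
    rw [show (LaurentPolynomial.C a : LaurentPolynomial ℂ) = AddMonoidAlgebra.single 0 a from rfl,
      AddMonoidAlgebra.single_mul_single, zero_add, AddMonoidAlgebra.smul_single']

lemma toLaurent_monomial (n : ℕ) (a : ℂ) :
    Polynomial.toLaurent (Polynomial.monomial n a) = LaurentPolynomial.C a * T (n : ℤ) := by
  rw [← Polynomial.C_mul_X_pow_eq_monomial, Polynomial.toLaurent_C_mul_X_pow]

lemma Lp (L : LaurentPolynomial ℂ →ₗ[ℂ] ℂ) (p : Polynomial ℂ) (s : ℤ) (N : ℕ)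
    (h : p.natDegree ≤ N) :
    L (Polynomial.toLaurent p * T s)
      = ∑ k ∈ range (N + 1), p.coeff k * L (T ((k : ℤ) + s)) := by
  conv_lhs => rw [p.as_sum_range' (N + 1) (Nat.lt_succ_of_le h), map_sum, Finset.sum_mul]
  rw [map_sum]
  refine Finset.sum_congr rfl fun k _ => ?_
  rw [toLaurent_monomial, mul_assoc, ← T_add, C_mul_eq_smul, map_smul, smul_eq_mul]

lemma polyBarInv_eq (p : Polynomial ℂ) : polyBarInv p = lbi (Polynomial.toLaurent p) := by
  induction p using Polynomial.induction_on' with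
  | add f g hf hg =>
    rw [map_add, lbi_add, ← hf, ← hg, polyBarInv, polyBarInv, polyBarInv,
      Polynomial.sum_add_index] <;> simp [add_mul]
  | monomial n a =>
    rw [polyBarInv, Polynomial.sum_monomial_index _ _ (by simp), toLaurent_monomial,
      lbi_mul, lbi_C, lbi_T]

lemma Lq (L : LaurentPolynomial ℂ →ₗ[ℂ] ℂ) (p : Polynomial ℂ) (N : ℕ)
    (h : p.natDegree ≤ N) :
    L (lbi (Polynomial.toLaurent p))
      = ∑ k ∈ range (N + 1), (starRingEnd ℂ) (p.coeff k) * L (T (-(k : ℤ))) := by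
  conv_lhs => rw [p.as_sum_range' (N + 1) (Nat.lt_succ_of_le h), map_sum, lbi_sum]
  rw [map_sum]
  refine Finset.sum_congr rfl fun k _ => ?_
  rw [toLaurent_monomial, lbi_mul, lbi_C, lbi_T, C_mul_eq_smul, map_smul, smul_eq_mul]

lemma toLaurent_reflect (p : Polynomial ℂ) (n : ℕ) (h : p.natDegree ≤ n) :
    Polynomial.toLaurent (Polynomial.reflect n (p.map (starRingEnd ℂ)))
      = T (n : ℤ) * lbi (Polynomial.toLaurent p) := by
  conv_lhs => rw [p.as_sum_range' (n + 1) (Nat.lt_succ_of_le h)]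
  conv_rhs => rw [p.as_sum_range' (n + 1) (Nat.lt_succ_of_le h), map_sum, lbi_sum,
    Finset.mul_sum]
  rw [Polynomial.map_sum]
  have : ∀ k, Polynomial.reflect n ((Polynomial.monomial k (p.coeff k)).map (starRingEnd ℂ))
      = Polynomial.monomial (revAt n k) ((starRingEnd ℂ) (p.coeff k)) := by
    intro k
    rw [Polynomial.map_monomial, ← Polynomial.C_mul_X_pow_eq_monomial, reflect_C_mul,
      reflect_monomial, Polynomial.C_mul_X_pow_eq_monomial]
  have hrs : Polynomial.reflect n
        (∑ i ∈ range (n + 1), Polynomial.map (starRingEnd ℂ) (Polynomial.monomial i (p.coeff i)))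
      = ∑ i ∈ range (n + 1),
          Polynomial.reflect n (Polynomial.map (starRingEnd ℂ) (Polynomial.monomial i (p.coeff i))) :=
    by ext i; simp [Polynomial.coeff_reflect, Polynomial.finset_sum_coeff]
  rw [hrs]
  simp_rw [this]
  rw [map_sum]
  refine Finset.sum_congr rfl fun k hk => ?_
  have hk' : k ≤ n := Nat.lt_succ_iff.mp (Finset.mem_range.mp hk)
  rw [toLaurent_monomial, toLaurent_monomial, lbi_mul, lbi_C, lbi_T, revAt_le hk',
    mul_left_comm, ← T_add]
  congr 2
  omega

end VB

-- moments
def mom (Φ : ℕ → Polynomial ℂ) : ℕ → ℂ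
  | 0 => 1
  | n + 1 => -∑ k ∈ (Finset.range (n + 1)).attach, (Φ (n + 1)).coeff k * mom Φ k
  decreasing_by exact Finset.mem_range.mp k.2

lemma mom_zero (Φ : ℕ → Polynomial ℂ) : mom Φ 0 = 1 := by rw [mom]

lemma mom_succ (Φ : ℕ → Polynomial ℂ) (n : ℕ) :
    mom Φ (n + 1) = -∑ k ∈ Finset.range (n + 1), (Φ (n + 1)).coeff k * mom Φ k := by
  rw [mom]; congr 1; exact Finset.sum_attach (Finset.range (n+1)) (fun k => (Φ (n+1)).coeff k * mom Φ k)

def moz (Φ : ℕ → Polynomial ℂ) : ℤ → ℂ :=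
  fun k => if 0 ≤ k then mom Φ k.toNat else (starRingEnd ℂ) (mom Φ (-k).toNat)

lemma moz_natCast (Φ : ℕ → Polynomial ℂ) (n : ℕ) : moz Φ (n : ℤ) = mom Φ n := by
  simp [moz]

lemma moz_neg (Φ : ℕ → Polynomial ℂ) (k : ℤ) : moz Φ (-k) = (starRingEnd ℂ) (moz Φ k) := by
  rcases lt_trichotomy k 0 with h | h | h
  · simp only [moz, if_neg (not_le.mpr h), if_pos (by omega : (0:ℤ) ≤ -k)]
    exact (Complex.conj_conj _).symm
  · subst h; simp [moz, mom_zero]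
  · simp only [moz, if_pos h.le, if_neg (by omega : ¬ (0:ℤ) ≤ -k), neg_neg]

def Lfun (Φ : ℕ → Polynomial ℂ) : LaurentPolynomial ℂ →ₗ[ℂ] ℂ :=
  Finsupp.linearCombination ℂ (moz Φ) ∘ₗ (AddMonoidAlgebra.coeffLinearEquiv ℂ).toLinearMap

namespace VB

lemma Lfun_single (Φ : ℕ → Polynomial ℂ) (n : ℤ) (a : ℂ) :
    Lfun Φ (AddMonoidAlgebra.single n a) = a * moz Φ n :=
  Finsupp.linearCombination_single ℂ (v := moz Φ) a n

lemma Lfun_T (Φ : ℕ → Polynomial ℂ) (n : ℤ) : Lfun Φ (T n) = moz Φ n := by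
  rw [show (T n : LaurentPolynomial ℂ) = AddMonoidAlgebra.single n 1 from rfl, Lfun_single, one_mul]

lemma Lfun_one (Φ : ℕ → Polynomial ℂ) : Lfun Φ 1 = 1 := by
  rw [show (1 : LaurentPolynomial ℂ) = AddMonoidAlgebra.single 0 1 from rfl, Lfun_single, one_mul]
  simp [moz, mom_zero]

lemma Lfun_herm (Φ : ℕ → Polynomial ℂ) (f : LaurentPolynomial ℂ) :
    Lfun Φ (laurentBarInv f) = (starRingEnd ℂ) (Lfun Φ f) := by
  induction f using AddMonoidAlgebra.induction_linear with
  | zero => simp [lbi_zero]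
  | add f g hf hg => rw [lbi_add, map_add, map_add, map_add, hf, hg]
  | single a b => rw [lbi_single, Lfun_single, Lfun_single, map_mul, ← moz_neg]

end VB

namespace VB

lemma L_C_mul (Φ : ℕ → Polynomial ℂ) (a : ℂ) (f : LaurentPolynomial ℂ) :
    Lfun Φ (LaurentPolynomial.C a * f) = a * Lfun Φ f := by
  rw [C_mul_eq_smul, map_smul, smul_eq_mul]

def kap (α : ℕ → ℂ) (n : ℕ) : ℝ := ∏ j ∈ Finset.range n, (1 - Complex.normSq (α j))

lemma L_phi_zero (Φ : ℕ → Polynomial ℂ) (hmon : ∀ n, (Φ n).Monic)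
    (hdeg : ∀ n, (Φ n).natDegree = n) (n : ℕ) :
    Lfun Φ (Polynomial.toLaurent (Φ (n + 1))) = 0 := by
  have h1 : Polynomial.toLaurent (Φ (n+1)) = Polynomial.toLaurent (Φ (n+1)) * T 0 := by
    rw [T_zero, mul_one]
  rw [h1, Lp (Lfun Φ) _ 0 (n+1) (le_of_eq (hdeg _))]
  have h2 : ∀ k : ℕ, Lfun Φ (T ((k:ℤ) + 0)) = mom Φ k := by
    intro k; rw [add_zero, Lfun_T, moz_natCast]
  simp_rw [h2]
  have hc : (Φ (n+1)).coeff (n+1) = 1 := by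
    have := (hmon (n+1)).coeff_natDegree; rwa [hdeg] at this
  rw [Finset.sum_range_succ, hc, one_mul, mom_succ]
  ring

lemma AC (Φ : ℕ → Polynomial ℂ) (α : ℕ → ℂ) (hmon : ∀ n, (Φ n).Monic)
    (hdeg : ∀ n, (Φ n).natDegree = n) (hΦ0 : Φ 0 = 1)
    (hrec : ∀ n, Φ (n + 1) = Polynomial.X * Φ n -
      Polynomial.C ((starRingEnd ℂ) (α n)) *
        Polynomial.reflect n ((Φ n).map (starRingEnd ℂ))) :
    ∀ n : ℕ,
      (∀ k : ℤ, 0 ≤ k → k < (n : ℤ) →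
          Lfun Φ (Polynomial.toLaurent (Φ n) * T (-k)) = 0) ∧
      Lfun Φ (Polynomial.toLaurent (Φ n) * T (-(n : ℤ))) = ((kap α n : ℝ) : ℂ) := by
  intro n
  induction n with
  | zero =>
    constructor
    · intro k hk hk'; exfalso; omega
    · rw [hΦ0, map_one, one_mul]
      norm_num [T_zero, Lfun_one, kap]
  | succ n ih =>
    obtain ⟨A, Cn⟩ := ih
    have lrec : Polynomial.toLaurent (Φ (n+1)) =
        T 1 * Polynomial.toLaurent (Φ n)
          - LaurentPolynomial.C ((starRingEnd ℂ) (α n)) *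
              (T (n:ℤ) * laurentBarInv (Polynomial.toLaurent (Φ n))) := by
      rw [hrec n, map_sub, _root_.map_mul, _root_.map_mul, Polynomial.toLaurent_X,
        Polynomial.toLaurent_C, toLaurent_reflect _ n (le_of_eq (hdeg n))]
    have main : ∀ k : ℤ, Lfun Φ (Polynomial.toLaurent (Φ (n+1)) * T (-k))
        = Lfun Φ (Polynomial.toLaurent (Φ n) * T (-(k-1)))
          - (starRingEnd ℂ) (α n) *
              (starRingEnd ℂ) (Lfun Φ (Polynomial.toLaurent (Φ n) * T (-((n:ℤ)-k)))) := by
      intro k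
      rw [lrec, sub_mul, map_sub]
      congr 1
      · rw [T_mul, mul_T_assoc, show (1:ℤ) + -k = -(k-1) by ring]
      · rw [mul_assoc, T_mul, mul_T_assoc, show (n:ℤ) + -k = -(k - n) by ring, ← lbi_T (k - (n:ℤ)),
          ← lbi_mul, L_C_mul, Lfun_herm, show k - (n:ℤ) = -((n:ℤ) - k) by ring]
    have A0 : Lfun Φ (Polynomial.toLaurent (Φ (n+1)) * T (-(0:ℤ))) = 0 := by
      rw [neg_zero, T_zero, mul_one]; exact L_phi_zero Φ hmon hdeg n
    have Ak : ∀ k : ℤ, 0 ≤ k → k < ((n:ℤ)+1) →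
        Lfun Φ (Polynomial.toLaurent (Φ (n+1)) * T (-k)) = 0 := by
      intro k hk hk'
      rcases eq_or_lt_of_le hk with h0 | hpos
      · rw [← h0]; exact A0
      · rw [main k, A (k-1) (by omega) (by omega), A ((n:ℤ)-k) (by omega) (by omega)]
        simp
    constructor
    · intro k hk hk'; exact Ak k hk (by push_cast at hk'; omega)
    · -- the norm computation
      have hT1 : Lfun Φ (Polynomial.toLaurent (Φ n) * T (1:ℤ))
          = (starRingEnd ℂ) (α n) * ((kap α n : ℝ) : ℂ) := by
        have e : Polynomial.toLaurent (Φ n) * T (1:ℤ)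
            = Polynomial.toLaurent (Φ (n+1))
              + LaurentPolynomial.C ((starRingEnd ℂ) (α n)) *
                  (T (n:ℤ) * laurentBarInv (Polynomial.toLaurent (Φ n))) := by
          rw [lrec, T_mul]; ring
        rw [e, map_add, show Polynomial.toLaurent (Φ (n+1))
            = Polynomial.toLaurent (Φ (n+1)) * T (-(0:ℤ)) by rw [neg_zero, T_zero, mul_one],
          A0, zero_add, L_C_mul]
        congr 1
        rw [T_mul, show (T ((n:ℤ)) : LaurentPolynomial ℂ) = laurentBarInv (T (-(n:ℤ))) by
            rw [lbi_T, neg_neg], ← lbi_mul, Lfun_herm, Cn, Complex.conj_ofReal]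
      have step : Lfun Φ (Polynomial.toLaurent (Φ (n+1)) * T (-((n:ℤ)+1)))
          = ((kap α (n+1) : ℝ) : ℂ) := by
        rw [main ((n:ℤ)+1), show ((n:ℤ)+1-1) = (n:ℤ) by ring, Cn,
          show (-((n:ℤ)-((n:ℤ)+1))) = (1:ℤ) by ring, hT1]
        rw [map_mul, Complex.conj_conj, Complex.conj_ofReal]
        rw [show (kap α (n+1) : ℂ) = ((kap α n : ℝ) : ℂ) * (1 - Complex.normSq (α n)) by
          rw [kap, Finset.prod_range_succ]; push_cast [kap]; ring]
        have : (starRingEnd ℂ) (α n) * (α n * ((kap α n : ℝ) : ℂ))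
            = (Complex.normSq (α n) : ℂ) * ((kap α n : ℝ) : ℂ) := by
          rw [← mul_assoc, mul_comm ((starRingEnd ℂ) (α n)) (α n), Complex.mul_conj]
        rw [this]; ring
      rw [show (-((n+1 : ℕ):ℤ)) = -((n:ℤ)+1) by push_cast; ring]
      exact step

end VB

namespace VB

lemma LC (L : LaurentPolynomial ℂ →ₗ[ℂ] ℂ) (a : ℂ) (f : LaurentPolynomial ℂ) :
    L (LaurentPolynomial.C a * f) = a * L f := by
  rw [C_mul_eq_smul, map_smul, smul_eq_mul]

lemma Bexp2 (L : LaurentPolynomial ℂ →ₗ[ℂ] ℂ) (f : LaurentPolynomial ℂ)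
    (p : Polynomial ℂ) (N : ℕ) (h : p.natDegree ≤ N) :
    L (f * laurentBarInv (Polynomial.toLaurent p))
      = ∑ k ∈ range (N + 1), (starRingEnd ℂ) (p.coeff k) * L (f * T (-(k:ℤ))) := by
  conv_lhs => rw [p.as_sum_range' (N + 1) (Nat.lt_succ_of_le h), map_sum, lbi_sum,
    Finset.mul_sum]
  rw [map_sum]
  refine Finset.sum_congr rfl fun k _ => ?_
  rw [toLaurent_monomial, lbi_mul, lbi_C, lbi_T, mul_left_comm, LC]

lemma orth (Φ : ℕ → Polynomial ℂ) (α : ℕ → ℂ) (hmon : ∀ n, (Φ n).Monic)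
    (hdeg : ∀ n, (Φ n).natDegree = n) (hΦ0 : Φ 0 = 1)
    (hrec : ∀ n, Φ (n + 1) = Polynomial.X * Φ n -
      Polynomial.C ((starRingEnd ℂ) (α n)) *
        Polynomial.reflect n ((Φ n).map (starRingEnd ℂ))) :
    ∀ m n : ℕ,
      Lfun Φ (Polynomial.toLaurent (Φ m) * laurentBarInv (Polynomial.toLaurent (Φ n)))
        = if m = n then ((kap α n : ℝ) : ℂ) else 0 := by
  have key : ∀ m n : ℕ, n ≤ m →
      Lfun Φ (Polynomial.toLaurent (Φ m) * laurentBarInv (Polynomial.toLaurent (Φ n)))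
        = if m = n then ((kap α n : ℝ) : ℂ) else 0 := by
    intro m n hnm
    rw [Bexp2 (Lfun Φ) _ (Φ n) n (le_of_eq (hdeg n))]
    rcases eq_or_lt_of_le hnm with he | hlt
    · subst he
      rw [if_pos rfl, Finset.sum_range_succ]
      have hz : ∀ k ∈ range n, (starRingEnd ℂ) ((Φ n).coeff k) *
          Lfun Φ (Polynomial.toLaurent (Φ n) * T (-(k:ℤ))) = 0 := by
        intro k hk
        rw [(AC Φ α hmon hdeg hΦ0 hrec n).1 (k:ℤ) (by positivity)
          (by exact_mod_cast Finset.mem_range.mp hk), mul_zero]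
      rw [Finset.sum_eq_zero hz, zero_add, (AC Φ α hmon hdeg hΦ0 hrec n).2]
      have hc : (Φ n).coeff n = 1 := by
        have := (hmon n).coeff_natDegree; rwa [hdeg] at this
      rw [hc, map_one, one_mul]
    · rw [if_neg (by omega)]
      refine Finset.sum_eq_zero fun k hk => ?_
      have hk' : (k:ℤ) < (m:ℤ) := by
        have := Finset.mem_range.mp hk; push_cast; omega
      rw [(AC Φ α hmon hdeg hΦ0 hrec m).1 (k:ℤ) (by positivity) hk', mul_zero]
  intro m n
  rcases le_or_gt n m with h | h
  · exact key m n h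
  · rw [if_neg (by omega)]
    have h1 := Lfun_herm Φ (Polynomial.toLaurent (Φ m) *
      laurentBarInv (Polynomial.toLaurent (Φ n)))
    have h2 : laurentBarInv (Polynomial.toLaurent (Φ m) *
        laurentBarInv (Polynomial.toLaurent (Φ n)))
        = Polynomial.toLaurent (Φ n) * laurentBarInv (Polynomial.toLaurent (Φ m)) := by
      rw [lbi_mul, lbi_lbi, mul_comm]
    rw [h2, key n m h.le, if_neg (by omega)] at h1
    have := h1.symm
    rwa [map_eq_zero_iff _ (starRingEnd ℂ).injective] at this

lemma uniq (Φ : ℕ → Polynomial ℂ) (hmon : ∀ n, (Φ n).Monic)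
    (hdeg : ∀ n, (Φ n).natDegree = n) (hΦ0 : Φ 0 = 1)
    (L₁ L₂ : LaurentPolynomial ℂ →ₗ[ℂ] ℂ)
    (h1 : L₁ 1 = 1 ∧ ∃ κ : ℕ → ℝ, (∀ n, 0 < κ n) ∧ ∀ m n : ℕ,
      L₁ (Polynomial.toLaurent (Φ m) * polyBarInv (Φ n)) = if m = n then (κ n : ℂ) else 0)
    (h2 : L₂ 1 = 1 ∧ ∃ κ : ℕ → ℝ, (∀ n, 0 < κ n) ∧ ∀ m n : ℕ,
      L₂ (Polynomial.toLaurent (Φ m) * polyBarInv (Φ n)) = if m = n then (κ n : ℂ) else 0) :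
    L₁ = L₂ := by
  obtain ⟨h11, κ₁, -, horth₁⟩ := h1
  obtain ⟨h21, κ₂, -, horth₂⟩ := h2
  have hone : Polynomial.toLaurent (Φ 0) = 1 := by rw [hΦ0, map_one]
  have hbone : polyBarInv (Φ 0) = 1 := by rw [polyBarInv_eq, hΦ0, map_one, lbi_one]
  have hc : ∀ n, (Φ (n+1)).coeff (n+1) = 1 := by
    intro n; have := (hmon (n+1)).coeff_natDegree; rwa [hdeg] at this
  have e1 : ∀ (L : LaurentPolynomial ℂ →ₗ[ℂ] ℂ) (n : ℕ),
      L (Polynomial.toLaurent (Φ (n+1))) = 0 →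
      L (T ((n:ℤ)+1)) = -∑ k ∈ range (n+1), (Φ (n+1)).coeff k * L (T (k:ℤ)) := by
    intro L n hz
    have h := Lp L (Φ (n+1)) 0 (n+1) (le_of_eq (hdeg _))
    rw [T_zero, mul_one, hz] at h
    simp_rw [add_zero] at h
    rw [Finset.sum_range_succ, hc n, one_mul] at h
    push_cast at h ⊢
    linear_combination -h
  have e2 : ∀ (L : LaurentPolynomial ℂ →ₗ[ℂ] ℂ) (n : ℕ),
      L (laurentBarInv (Polynomial.toLaurent (Φ (n+1)))) = 0 →
      L (T (-((n:ℤ)+1))) = -∑ k ∈ range (n+1),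
        (starRingEnd ℂ) ((Φ (n+1)).coeff k) * L (T (-(k:ℤ))) := by
    intro L n hz
    have h := Lq L (Φ (n+1)) (n+1) (le_of_eq (hdeg _))
    rw [hz] at h
    rw [Finset.sum_range_succ, hc n, map_one, one_mul] at h
    push_cast at h ⊢
    linear_combination -h
  have key : ∀ n : ℕ, L₁ (T (n:ℤ)) = L₂ (T (n:ℤ)) ∧ L₁ (T (-(n:ℤ))) = L₂ (T (-(n:ℤ))) := by
    intro n
    induction n using Nat.strong_induction_on with
    | _ n ih =>
      match n with
      | 0 =>
        norm_num [T_zero, h11, h21]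
      | (n+1) =>
        have hz1 : L₁ (Polynomial.toLaurent (Φ (n+1))) = 0 := by
          have := horth₁ (n+1) 0
          rwa [hbone, mul_one, if_neg (by omega)] at this
        have hz1' : L₂ (Polynomial.toLaurent (Φ (n+1))) = 0 := by
          have := horth₂ (n+1) 0
          rwa [hbone, mul_one, if_neg (by omega)] at this
        have hz2 : L₁ (laurentBarInv (Polynomial.toLaurent (Φ (n+1)))) = 0 := by
          have := horth₁ 0 (n+1)
          rwa [hone, one_mul, polyBarInv_eq, if_neg (by omega)] at this
        have hz2' : L₂ (laurentBarInv (Polynomial.toLaurent (Φ (n+1)))) = 0 := by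
          have := horth₂ 0 (n+1)
          rwa [hone, one_mul, polyBarInv_eq, if_neg (by omega)] at this
        constructor
        · rw [show (((n+1:ℕ)):ℤ) = (n:ℤ)+1 by push_cast; ring, e1 L₁ n hz1, e1 L₂ n hz1']
          congr 1
          refine Finset.sum_congr rfl fun k hk => ?_
          rw [(ih k (Finset.mem_range.mp hk)).1]
        · rw [show (-((n+1:ℕ):ℤ)) = -((n:ℤ)+1) by push_cast; ring, e2 L₁ n hz2, e2 L₂ n hz2']
          congr 1
          refine Finset.sum_congr rfl fun k hk => ?_
          rw [(ih k (Finset.mem_range.mp hk)).2]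
  have keyz : ∀ z : ℤ, L₁ (T z) = L₂ (T z) := by
    intro z
    rcases le_or_gt 0 z with h | h
    · obtain ⟨k, hk⟩ : ∃ k : ℕ, z = (k:ℤ) := ⟨z.toNat, by omega⟩
      rw [hk]; exact (key k).1
    · obtain ⟨k, hk⟩ : ∃ k : ℕ, z = -(k:ℤ) := ⟨(-z).toNat, by omega⟩
      rw [hk]; exact (key k).2
  apply LinearMap.ext
  intro f
  induction f using AddMonoidAlgebra.induction_linear with
  | zero => rw [map_zero, map_zero]
  | add f g hf hg => rw [map_add, map_add, hf, hg]
  | single a b => rw [single_eq_C_mul_T, LC, LC, keyz]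

end VB

namespace VB

section Backward

variable (Φ : ℕ → Polynomial ℂ) (L : LaurentPolynomial ℂ →ₗ[ℂ] ℂ) (κ : ℕ → ℝ)

lemma expand (hmon : ∀ n, (Φ n).Monic) (hdeg : ∀ n, (Φ n).natDegree = n) (hΦ0 : Φ 0 = 1) :
    ∀ (N : ℕ) (p : Polynomial ℂ), p.natDegree ≤ N →
      ∃ c : ℕ → ℂ, p = ∑ k ∈ range (N + 1), Polynomial.C (c k) * Φ k := by
  intro N
  induction N with
  | zero =>
    intro p hp
    refine ⟨fun _ => p.coeff 0, ?_⟩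
    rw [Finset.sum_range_one, hΦ0, mul_one]
    exact Polynomial.eq_C_of_natDegree_le_zero hp
  | succ N ihN =>
    intro p hp
    set q := p - Polynomial.C (p.coeff (N+1)) * Φ (N+1) with hq
    have hqd : q.natDegree ≤ N := by
      rw [Polynomial.natDegree_le_iff_coeff_eq_zero]
      intro m hm
      rw [hq, Polynomial.coeff_sub, Polynomial.coeff_C_mul]
      rcases eq_or_lt_of_le (Nat.succ_le_of_lt hm) with he | hlt
      · have hc : (Φ (N+1)).coeff (N+1) = 1 := by
          have := (hmon (N+1)).coeff_natDegree; rwa [hdeg] at this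
        rw [← he, hc, mul_one, sub_self]
      · have e1 : p.coeff m = 0 :=
          Polynomial.coeff_eq_zero_of_natDegree_lt (lt_of_le_of_lt hp hlt)
        have e2 : (Φ (N+1)).coeff m = 0 :=
          Polynomial.coeff_eq_zero_of_natDegree_lt (by rw [hdeg]; exact hlt)
        rw [e1, e2, mul_zero, sub_zero]
    obtain ⟨c, hc⟩ := ihN q hqd
    refine ⟨fun k => if k = N + 1 then p.coeff (N+1) else c k, ?_⟩
    rw [Finset.sum_range_succ]
    simp only [if_true]
    have : ∑ k ∈ range (N + 1), Polynomial.C (if k = N + 1 then p.coeff (N+1) else c k) * Φ k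
        = ∑ k ∈ range (N + 1), Polynomial.C (c k) * Φ k := by
      refine Finset.sum_congr rfl fun k hk => ?_
      rw [if_neg (by have := Finset.mem_range.mp hk; omega)]
    rw [this, ← hc, hq]
    ring

lemma master (hmon : ∀ n, (Φ n).Monic) (hdeg : ∀ n, (Φ n).natDegree = n) (hΦ0 : Φ 0 = 1)
    (p : Polynomial ℂ) (N : ℕ) (h : p.natDegree ≤ N) :
    ∃ c : ℕ → ℂ, c N = p.coeff N ∧
      (∀ g, L (Polynomial.toLaurent p * g)
        = ∑ k ∈ range (N + 1), c k * L (Polynomial.toLaurent (Φ k) * g)) ∧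
      (∀ f, L (f * laurentBarInv (Polynomial.toLaurent p))
        = ∑ k ∈ range (N + 1),
            (starRingEnd ℂ) (c k) * L (f * laurentBarInv (Polynomial.toLaurent (Φ k)))) := by
  obtain ⟨c, hc⟩ := expand Φ hmon hdeg hΦ0 N p h
  refine ⟨c, ?_, ?_, ?_⟩
  · have h2 := congrArg (fun r => Polynomial.coeff r N) hc
    simp only [Polynomial.finset_sum_coeff, Polynomial.coeff_C_mul] at h2
    rw [Finset.sum_eq_single N (fun k hk hne => by
        rw [Polynomial.coeff_eq_zero_of_natDegree_lt
          (by rw [hdeg]; exact lt_of_le_of_ne (Nat.lt_succ_iff.mp (Finset.mem_range.mp hk)) hne),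
          mul_zero])
      (fun hN => absurd (Finset.self_mem_range_succ N) hN)] at h2
    have hcN : (Φ N).coeff N = 1 := by
      have := (hmon N).coeff_natDegree; rwa [hdeg] at this
    rw [hcN, mul_one] at h2
    exact h2.symm
  · intro g
    conv_lhs => rw [hc, map_sum, Finset.sum_mul]
    rw [map_sum]
    refine Finset.sum_congr rfl fun k _ => ?_
    rw [Polynomial.toLaurent_C_mul_eq, mul_assoc, LC]
  · intro f
    conv_lhs => rw [hc, map_sum, lbi_sum, Finset.mul_sum]
    rw [map_sum]
    refine Finset.sum_congr rfl fun k _ => ?_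
    rw [Polynomial.toLaurent_C_mul_eq, lbi_mul, lbi_C, mul_left_comm, LC]

variable (hmon : ∀ n, (Φ n).Monic) (hdeg : ∀ n, (Φ n).natDegree = n) (hΦ0 : Φ 0 = 1)
  (hκ : ∀ n, 0 < κ n)
  (horth : ∀ m n : ℕ, L (Polynomial.toLaurent (Φ m) *
      laurentBarInv (Polynomial.toLaurent (Φ n))) = if m = n then ((κ n : ℝ) : ℂ) else 0)

include hmon hdeg hΦ0 horth

lemma orth1 (p : Polynomial ℂ) (N : ℕ) (h : p.natDegree ≤ N) (j : ℕ) (hj : N < j) :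
    L (Polynomial.toLaurent p * laurentBarInv (Polynomial.toLaurent (Φ j))) = 0 := by
  obtain ⟨c, -, h1, -⟩ := master Φ L hmon hdeg hΦ0 p N h
  rw [h1]
  refine Finset.sum_eq_zero fun k hk => ?_
  rw [horth, if_neg (by have := Finset.mem_range.mp hk; omega), mul_zero]

lemma orth2 (p : Polynomial ℂ) (N : ℕ) (h : p.natDegree ≤ N) (j : ℕ) (hj : N < j) :
    L (Polynomial.toLaurent (Φ j) * laurentBarInv (Polynomial.toLaurent p)) = 0 := by
  obtain ⟨c, -, -, h2⟩ := master Φ L hmon hdeg hΦ0 p N h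
  rw [h2]
  refine Finset.sum_eq_zero fun k hk => ?_
  rw [horth, if_neg (by have := Finset.mem_range.mp hk; omega), mul_zero]

lemma val1 (p : Polynomial ℂ) (N : ℕ) (h : p.natDegree ≤ N) :
    L (Polynomial.toLaurent p * laurentBarInv (Polynomial.toLaurent (Φ N)))
      = p.coeff N * ((κ N : ℝ) : ℂ) := by
  obtain ⟨c, hcN, h1, -⟩ := master Φ L hmon hdeg hΦ0 p N h
  rw [h1, Finset.sum_eq_single N (fun k hk hne => by rw [horth, if_neg hne, mul_zero])
    (fun hN => absurd (Finset.self_mem_range_succ N) hN), horth, if_pos rfl, hcN]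

lemma val2 (p : Polynomial ℂ) (N : ℕ) (h : p.natDegree ≤ N) :
    L (Polynomial.toLaurent (Φ N) * laurentBarInv (Polynomial.toLaurent p))
      = (starRingEnd ℂ) (p.coeff N) * ((κ N : ℝ) : ℂ) := by
  obtain ⟨c, hcN, -, h2⟩ := master Φ L hmon hdeg hΦ0 p N h
  rw [h2, Finset.sum_eq_single N (fun k hk hne => by
      rw [horth, if_neg (fun he => hne he.symm), mul_zero])
    (fun hN => absurd (Finset.self_mem_range_succ N) hN), horth, if_pos rfl, hcN]

include hκ in
lemma zero_orth (ψ : Polynomial ℂ) (n : ℕ) (h : ψ.natDegree ≤ n)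
    (hz : ∀ j ≤ n, L (Polynomial.toLaurent ψ *
      laurentBarInv (Polynomial.toLaurent (Φ j))) = 0) : ψ = 0 := by
  obtain ⟨c, hc⟩ := expand Φ hmon hdeg hΦ0 n ψ h
  have hcz : ∀ j ≤ n, c j = 0 := by
    intro j hj
    have e := hz j hj
    conv at e => lhs; rw [hc, map_sum, Finset.sum_mul]
    rw [map_sum] at e
    have e2 : ∀ k ∈ range (n+1),
        L (Polynomial.toLaurent (Polynomial.C (c k) * Φ k) *
            laurentBarInv (Polynomial.toLaurent (Φ j)))
          = if k = j then c k * ((κ j : ℝ) : ℂ) else 0 := by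
      intro k _
      rw [Polynomial.toLaurent_C_mul_eq, mul_assoc, LC, horth]
      split_ifs with hkj
      · rw [hkj]
      · rw [mul_zero]
    rw [Finset.sum_congr rfl e2, Finset.sum_eq_single j
      (fun k _ hne => if_neg hne) (fun hN => absurd (Finset.mem_range.mpr (by omega)) hN),
      if_pos rfl] at e
    have hκ' : ((κ j : ℝ) : ℂ) ≠ 0 := by
      exact_mod_cast (hκ j).ne'
    exact (mul_eq_zero.mp e).resolve_right hκ'
  rw [hc]
  refine Finset.sum_eq_zero fun k hk => ?_
  rw [hcz k (Nat.lt_succ_iff.mp (Finset.mem_range.mp hk)), map_zero, zero_mul]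

end Backward
end VB

namespace VB
section Backward2

variable (Φ : ℕ → Polynomial ℂ) (L : LaurentPolynomial ℂ →ₗ[ℂ] ℂ) (κ : ℕ → ℝ)
variable (hmon : ∀ n, (Φ n).Monic) (hdeg : ∀ n, (Φ n).natDegree = n) (hΦ0 : Φ 0 = 1)
  (hκ : ∀ n, 0 < κ n)
  (horth : ∀ m n : ℕ, L (Polynomial.toLaurent (Φ m) *
      laurentBarInv (Polynomial.toLaurent (Φ n))) = if m = n then ((κ n : ℝ) : ℂ) else 0)

include hmon hdeg hΦ0 hκ horth

lemma backward_main (n : ℕ) :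
    ∃ a : ℂ, ‖a‖ < 1 ∧
      Φ (n+1) = Polynomial.X * Φ n - Polynomial.C ((starRingEnd ℂ) a) *
        Polynomial.reflect n ((Φ n).map (starRingEnd ℂ)) := by
  set Φs := Polynomial.reflect n ((Φ n).map (starRingEnd ℂ)) with hΦs
  have ts : Polynomial.toLaurent Φs = T (n:ℤ) * laurentBarInv (Polynomial.toLaurent (Φ n)) :=
    toLaurent_reflect (Φ n) n (le_of_eq (hdeg n))
  have hΦsdeg : Φs.natDegree ≤ n := by
    rw [Polynomial.natDegree_le_iff_coeff_eq_zero]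
    intro m hm
    rw [hΦs, Polynomial.coeff_reflect, Polynomial.revAt_eq_self_of_lt hm, Polynomial.coeff_map,
      Polynomial.coeff_eq_zero_of_natDegree_lt (by rw [hdeg]; exact hm), map_zero]
  have hκn : ((κ n : ℝ) : ℂ) ≠ 0 := by exact_mod_cast (hκ n).ne'
  set c : ℂ := L (Polynomial.toLaurent (Φ (n+1) - Polynomial.X * Φ n)) / ((κ n : ℝ) : ℂ)
    with hcdef
  have hceq : L (Polynomial.toLaurent (Φ (n+1) - Polynomial.X * Φ n)) = c * ((κ n : ℝ) : ℂ) := by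
    rw [hcdef]; field_simp
  set ψ : Polynomial ℂ := Φ (n+1) - Polynomial.X * Φ n - Polynomial.C c * Φs with hψdef
  have hc1 : (Φ (n+1)).coeff (n+1) = 1 := by
    have := (hmon (n+1)).coeff_natDegree; rwa [hdeg] at this
  have hc2 : (Φ n).coeff n = 1 := by
    have := (hmon n).coeff_natDegree; rwa [hdeg] at this
  have hdegψ : ψ.natDegree ≤ n := by
    rw [Polynomial.natDegree_le_iff_coeff_eq_zero]
    intro m hm
    match m, hm with
    | (m'+1), hm =>
      have hm' : n ≤ m' := by omega
      rw [hψdef]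
      simp only [Polynomial.coeff_sub, Polynomial.coeff_C_mul, Polynomial.coeff_X_mul]
      rw [Polynomial.coeff_eq_zero_of_natDegree_lt (lt_of_le_of_lt hΦsdeg (by omega)), mul_zero,
        sub_zero]
      rcases eq_or_lt_of_le hm' with he | hlt
      · rw [← he, hc2, hc1, sub_self]
      · rw [Polynomial.coeff_eq_zero_of_natDegree_lt (by rw [hdeg]; omega),
          Polynomial.coeff_eq_zero_of_natDegree_lt (by rw [hdeg]; omega), sub_self]
  -- basic B-values
  have hB1 : ∀ (j k : ℕ), k < j →
      L (Polynomial.toLaurent (Φ j) * T (-(k:ℤ))) = 0 := by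
    intro j k hk
    have := orth2 Φ L κ hmon hdeg hΦ0 horth (Polynomial.X ^ k) k
      (le_of_eq (Polynomial.natDegree_X_pow k)) j hk
    rwa [Polynomial.toLaurent_X_pow, lbi_T] at this
  have hB2 : ∀ k : ℕ, k < n → L (T ((k:ℕ):ℤ) * laurentBarInv (Polynomial.toLaurent (Φ n))) = 0 := by
    intro k hk
    have := orth1 Φ L κ hmon hdeg hΦ0 horth (Polynomial.X ^ k) k
      (le_of_eq (Polynomial.natDegree_X_pow k)) n hk
    rwa [Polynomial.toLaurent_X_pow] at this
  have hB2' : L (T ((n:ℕ):ℤ) * laurentBarInv (Polynomial.toLaurent (Φ n))) = ((κ n : ℝ) : ℂ) := by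
    have := val1 Φ L κ hmon hdeg hΦ0 horth (Polynomial.X ^ n) n
      (le_of_eq (Polynomial.natDegree_X_pow n))
    rwa [Polynomial.toLaurent_X_pow, Polynomial.coeff_X_pow, if_pos rfl, one_mul] at this
  have expψ : Polynomial.toLaurent ψ
      = Polynomial.toLaurent (Φ (n+1)) - T 1 * Polynomial.toLaurent (Φ n)
        - LaurentPolynomial.C c * (T ((n:ℕ):ℤ) * laurentBarInv (Polynomial.toLaurent (Φ n))) := by
    rw [hψdef, map_sub, map_sub, _root_.map_mul, Polynomial.toLaurent_X,
      Polynomial.toLaurent_C_mul_eq, ts]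
  have s1 : ∀ k : ℕ, k ≤ n → L (Polynomial.toLaurent ψ * T (-(k:ℤ))) = 0 := by
    intro k hk
    rw [expψ, sub_mul, sub_mul, map_sub, map_sub]
    have h3 : LaurentPolynomial.C c * (T ((n:ℕ):ℤ) * laurentBarInv (Polynomial.toLaurent (Φ n)))
          * T (-(k:ℤ))
        = LaurentPolynomial.C c *
            (T (((n - k : ℕ)):ℤ) * laurentBarInv (Polynomial.toLaurent (Φ n))) := by
      have e : ∀ (g : LaurentPolynomial ℂ),
          LaurentPolynomial.C c * (T ((n:ℕ):ℤ) * g) * T (-(k:ℤ))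
            = LaurentPolynomial.C c * ((T ((n:ℕ):ℤ) * T (-(k:ℤ))) * g) := by
        intro g; ring
      rw [e, ← T_add, show ((n:ℕ):ℤ) + -(k:ℤ) = (((n-k:ℕ)):ℤ) by omega]
    rw [h3]
    rcases Nat.eq_zero_or_pos k with rfl | hkpos
    · rw [Nat.cast_zero, neg_zero, T_zero, mul_one, mul_one, Nat.sub_zero, LC, hB2']
      have e2 : L (Polynomial.toLaurent (Φ (n+1))) - L (T 1 * Polynomial.toLaurent (Φ n))
          = c * ((κ n : ℝ) : ℂ) := by
        rw [← hceq, show Polynomial.toLaurent (Φ (n + 1) - Polynomial.X * Φ n)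
            = Polynomial.toLaurent (Φ (n+1)) - T 1 * Polynomial.toLaurent (Φ n) from by
          rw [map_sub, _root_.map_mul, Polynomial.toLaurent_X], map_sub]
      rw [sub_sub, ← e2]; ring
    · rw [hB1 (n+1) k (by omega)]
      have e2 : T (1:ℤ) * Polynomial.toLaurent (Φ n) * T (-(k:ℤ))
          = Polynomial.toLaurent (Φ n) * T (-((k-1:ℕ):ℤ)) := by
        rw [T_mul, mul_T_assoc, show (1:ℤ) + -(k:ℤ) = -((k-1:ℕ):ℤ) by omega]
      rw [e2, hB1 n (k-1) (by omega), LC, hB2 (n-k) (by omega), mul_zero, sub_zero, sub_zero]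
  have s2 : ∀ j, j ≤ n → L (Polynomial.toLaurent ψ *
      laurentBarInv (Polynomial.toLaurent (Φ j))) = 0 := by
    intro j hj
    rw [Bexp2 L _ (Φ j) j (le_of_eq (hdeg j))]
    refine Finset.sum_eq_zero fun k hk => ?_
    rw [s1 k (by have := Finset.mem_range.mp hk; omega), mul_zero]
  have hψ0 : ψ = 0 := zero_orth Φ L κ hmon hdeg hΦ0 hκ horth ψ n hdegψ s2
  have heq : Φ (n+1) = Polynomial.X * Φ n + Polynomial.C c * Φs := by
    have h := hψ0
    rw [hψdef, sub_sub, sub_eq_zero] at h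
    exact h
  refine ⟨-((starRingEnd ℂ) c), ?_, ?_⟩
  swap
  · rw [map_neg, Complex.conj_conj, map_neg, heq]; ring
  -- now the norm bound
  have lψ : Polynomial.toLaurent (Φ (n+1))
      = T 1 * Polynomial.toLaurent (Φ n) + LaurentPolynomial.C c * Polynomial.toLaurent Φs := by
    rw [heq, map_add, _root_.map_mul, Polynomial.toLaurent_X, Polynomial.toLaurent_C_mul_eq]
  have hV : L (Polynomial.toLaurent Φs * laurentBarInv (Polynomial.toLaurent Φs))
      = ((κ n : ℝ) : ℂ) := by
    rw [ts, lbi_mul, lbi_T, lbi_lbi]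
    have e : T ((n:ℕ):ℤ) * laurentBarInv (Polynomial.toLaurent (Φ n)) *
        (T (-((n:ℕ):ℤ)) * Polynomial.toLaurent (Φ n))
        = (T ((n:ℕ):ℤ) * T (-((n:ℕ):ℤ))) *
            (Polynomial.toLaurent (Φ n) * laurentBarInv (Polynomial.toLaurent (Φ n))) := by
      ring
    rw [e, ← T_add, add_neg_cancel, T_zero, one_mul, horth, if_pos rfl]
  have hW : L (Polynomial.toLaurent Φs * laurentBarInv (T 1 * Polynomial.toLaurent (Φ n)))
      = -((starRingEnd ℂ) c) * ((κ n : ℝ) : ℂ) := by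
    have e : T (1:ℤ) * Polynomial.toLaurent (Φ n)
        = Polynomial.toLaurent (Φ (n+1)) - LaurentPolynomial.C c * Polynomial.toLaurent Φs := by
      rw [lψ]; ring
    rw [e, lbi_sub, mul_sub, map_sub, orth1 Φ L κ hmon hdeg hΦ0 horth Φs n hΦsdeg (n+1) (by omega),
      lbi_mul, lbi_C, mul_left_comm, LC, hV, zero_sub, neg_mul]
  have hA : L (Polynomial.toLaurent (Φ (n+1)) * laurentBarInv (T 1 * Polynomial.toLaurent (Φ n)))
      = (1 - (Complex.normSq c : ℝ)) * ((κ n : ℝ) : ℂ) := by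
    conv_lhs => rw [lψ, add_mul]
    rw [map_add]
    have e1 : T (1:ℤ) * Polynomial.toLaurent (Φ n) *
        laurentBarInv (T 1 * Polynomial.toLaurent (Φ n))
        = (T (1:ℤ) * T (-(1:ℤ))) *
            (Polynomial.toLaurent (Φ n) * laurentBarInv (Polynomial.toLaurent (Φ n))) := by
      rw [lbi_mul, lbi_T]; ring
    rw [e1, ← T_add, add_neg_cancel, T_zero, one_mul, horth, if_pos rfl, mul_assoc, LC, hW]
    rw [show c * (-((starRingEnd ℂ) c) * ((κ n : ℝ) : ℂ))
        = -(c * (starRingEnd ℂ) c) * ((κ n : ℝ) : ℂ) by ring, Complex.mul_conj]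
    push_cast
    ring
  have k2 : ((κ (n+1) : ℝ) : ℂ) = (1 - (Complex.normSq c : ℝ)) * ((κ n : ℝ) : ℂ) := by
    have k1 := horth (n+1) (n+1)
    rw [if_pos rfl] at k1
    rw [← k1]
    conv_lhs => rw [show laurentBarInv (Polynomial.toLaurent (Φ (n+1)))
        = laurentBarInv (T 1 * Polynomial.toLaurent (Φ n)) +
            LaurentPolynomial.C ((starRingEnd ℂ) c) *
              laurentBarInv (Polynomial.toLaurent Φs) by
      rw [lψ, lbi_add]
      congr 1
      rw [lbi_mul, lbi_C]]
    rw [mul_add, map_add, hA, mul_left_comm, LC,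
      orth2 Φ L κ hmon hdeg hΦ0 horth Φs n hΦsdeg (n+1) (by omega), mul_zero, add_zero]
  have k3 : κ (n+1) = (1 - Complex.normSq c) * κ n := by
    exact_mod_cast k2
  have hns : Complex.normSq c < 1 := by
    nlinarith [hκ n, hκ (n+1)]
  have habs : ‖(-((starRingEnd ℂ) c))‖ ^ 2 = Complex.normSq c := by
    rw [Complex.sq_norm, Complex.normSq_neg, Complex.normSq_conj]
  nlinarith [norm_nonneg (-((starRingEnd ℂ) c))]

end Backward2
end VB


/-- the linear functional version of Verblunsky's theorem. -/
theorem verblunsky_linear_functional (Φ : ℕ → Polynomial ℂ) (hmon : ∀ n, (Φ n).Monic)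
    (hdeg : ∀ n, (Φ n).natDegree = n) (hΦ0 : Φ 0 = 1) :
    (∃ α : ℕ → ℂ, (∀ n, ‖α n‖ < 1) ∧
        ∀ n : ℕ, Φ (n + 1) =
          Polynomial.X * Φ n -
            Polynomial.C ((starRingEnd ℂ) (α n)) *
              Polynomial.reflect n ((Φ n).map (starRingEnd ℂ))) ↔
      (∃! L : LaurentPolynomial ℂ →ₗ[ℂ] ℂ, L 1 = 1 ∧
        ∃ κ : ℕ → ℝ, (∀ n, 0 < κ n) ∧
          ∀ m n : ℕ,
            L (Polynomial.toLaurent (Φ m) * polyBarInv (Φ n)) =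
              if m = n then (κ n : ℂ) else 0) := by
  constructor
  · rintro ⟨α, hα, hrec⟩
    have horth := VB.orth Φ α hmon hdeg hΦ0 hrec
    have hpos : ∀ n, 0 < VB.kap α n := fun n => Finset.prod_pos fun j _ => by
      nlinarith [Complex.sq_norm (α j), norm_nonneg (α j), hα j]
    have horth' : ∀ m n : ℕ, Lfun Φ (Polynomial.toLaurent (Φ m) * polyBarInv (Φ n))
        = if m = n then ((VB.kap α n : ℝ) : ℂ) else 0 := fun m n => by
      rw [VB.polyBarInv_eq]; exact horth m n
    exact ⟨Lfun Φ, ⟨VB.Lfun_one Φ, VB.kap α, hpos, horth'⟩,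
      fun L' hL' => VB.uniq Φ hmon hdeg hΦ0 L' (Lfun Φ) hL'
        ⟨VB.Lfun_one Φ, VB.kap α, hpos, horth'⟩⟩
  · rintro ⟨L, ⟨hL1, κ, hκpos, horth⟩, -⟩
    have horth' : ∀ m n : ℕ, L (Polynomial.toLaurent (Φ m) *
        laurentBarInv (Polynomial.toLaurent (Φ n))) = if m = n then ((κ n : ℝ) : ℂ) else 0 :=
      fun m n => by rw [← VB.polyBarInv_eq]; exact horth m n
    choose a ha hrec using fun n =>
      VB.backward_main Φ L κ hmon hdeg hΦ0 hκpos horth' n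
    exact ⟨a, ha, hrec⟩

end
end

section
/- For every integer m and every nonnegative integer n, det((μ_{m+i-j})_{0≤i,j≤n}) = (∏_{k=0}^{n-1}(1-|α_k|²)^{n-k}) · det((μ_{m+i,0,j})_{0≤i,j≤n}), where μ_{m+i,0,j} = L(z^{-(m+i)}·Φ_j(z)) / ⟨Φ_j(z), Φ_j(z)⟩ and the empty product (n = 0) is interpreted as 1. -/
open Polynomial LaurentPolynomial Finset

noncomputable section

lemma szego_monic_natDegree (α : ℕ → ℂ) : ∀ n, (szego α n).Monic ∧ (szego α n).natDegree = n := by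
  intro n
  induction n with
  | zero => exact ⟨monic_one, natDegree_one⟩
  | succ n ih =>
    have hrefl : (Polynomial.C ((starRingEnd ℂ) (α n)) *
        Polynomial.reflect n ((szego α n).map (starRingEnd ℂ))).natDegree ≤ n := by
      refine (natDegree_C_mul_le _ _).trans ?_
      rw [Polynomial.natDegree_le_iff_coeff_eq_zero]
      intro N hN
      rw [Polynomial.coeff_reflect, Polynomial.revAt_eq_self_of_lt hN, Polynomial.coeff_map,
        Polynomial.coeff_eq_zero_of_natDegree_lt
          (by rw [ih.2]; exact hN : (szego α n).natDegree < N), map_zero]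
    have hm : (Polynomial.X * szego α n).Monic := (monic_X).mul ih.1
    have hd : (Polynomial.X * szego α n).natDegree = n + 1 := by
      rw [natDegree_mul (X_ne_zero) ih.1.ne_zero, natDegree_X, ih.2, add_comm]
    have hdeg : (Polynomial.C ((starRingEnd ℂ) (α n)) *
        Polynomial.reflect n ((szego α n).map (starRingEnd ℂ))).degree <
        (Polynomial.X * szego α n).degree := by
      apply lt_of_le_of_lt (Polynomial.degree_le_natDegree.trans
        (by exact_mod_cast Nat.cast_le.2 hrefl))
      rw [degree_eq_natDegree hm.ne_zero, hd]
      exact_mod_cast Nat.lt_succ_self n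
    have hmonic : (szego α (n+1)).Monic := by
      show (Polynomial.X * szego α n - _).Monic
      exact hm.sub_of_left hdeg
    refine ⟨hmonic, ?_⟩
    show (Polynomial.X * szego α n - _).natDegree = n + 1
    rw [← hd]
    apply natDegree_eq_of_degree_eq
    rw [degree_sub_eq_left_of_degree_lt hdeg]

lemma prod_prod_range (c : ℕ → ℂ) :
    ∀ n : ℕ, ∏ j ∈ Finset.range (n+1), ∏ k ∈ Finset.range j, c k
      = ∏ k ∈ Finset.range n, c k ^ (n - k) := by
  intro n
  induction n with
  | zero => simp
  | succ n ih =>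
    rw [Finset.prod_range_succ, ih]
    symm
    calc ∏ k ∈ Finset.range (n+1), c k ^ (n+1-k)
        = ∏ k ∈ Finset.range (n+1), (c k ^ (n-k) * c k) := by
          refine Finset.prod_congr rfl fun k hk => ?_
          rw [← pow_succ]
          congr 1
          have := Finset.mem_range.1 hk
          omega
      _ = (∏ k ∈ Finset.range (n+1), c k ^ (n-k)) * ∏ k ∈ Finset.range (n+1), c k :=
          Finset.prod_mul_distrib
      _ = (∏ k ∈ Finset.range n, c k ^ (n-k)) * ∏ k ∈ Finset.range (n+1), c k := by
          rw [Finset.prod_range_succ, Nat.sub_self, pow_zero, mul_one]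

/-- `det (μ_{m+i-j}) = ∏_{k<n} (1-|α_k|²)^{n-k} · det (μ_{m+i,0,j})`. -/
theorem det_toeplitz_eq_det_genMom (α : ℕ → ℂ) (hα : ∀ k, ‖α k‖ < 1)
    (L : LaurentPolynomial ℂ →ₗ[ℂ] ℂ) (hL1 : L 1 = 1)
    (hLphi : ∀ k : ℕ, 1 ≤ k → L (Polynomial.toLaurent (szego α k)) = 0)
    (hLbar : ∀ k : ℕ, 1 ≤ k → L (polyBarInv (szego α k)) = 0)
    (m : ℤ) (n : ℕ) :
    (Matrix.of fun i j : Fin (n + 1) =>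
        L (LaurentPolynomial.T (-(m + (i : ℤ) - (j : ℤ))))).det =
      (∏ k ∈ Finset.range n, ((1 - Complex.normSq (α k) : ℝ) : ℂ) ^ (n - k)) *
        (Matrix.of fun i j : Fin (n + 1) =>
          L (LaurentPolynomial.T (-(m + (i : ℤ))) * Polynomial.toLaurent (szego α j)) /
            ∏ k ∈ Finset.range (j : ℕ), ((1 - Complex.normSq (α k) : ℝ) : ℂ)).det := by
  classical
  set c : ℕ → ℂ := fun k => ((1 - Complex.normSq (α k) : ℝ) : ℂ) with hc
  have hcne : ∀ k, c k ≠ 0 := by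
    intro k
    have h1 : Complex.normSq (α k) < 1 := by
      have := hα k
      have := Complex.sq_norm (α k)
      nlinarith [norm_nonneg (α k)]
    simp only [hc, ne_eq, Complex.ofReal_eq_zero]
    intro h; linarith [h]
  set d : Fin (n+1) → ℂ := fun j => ∏ k ∈ Finset.range (j : ℕ), c k with hdd
  have hdne : ∀ j, d j ≠ 0 := fun j => Finset.prod_ne_zero_iff.2 fun k _ => hcne k
  set A : Matrix (Fin (n+1)) (Fin (n+1)) ℂ :=
    Matrix.of fun i j : Fin (n + 1) =>
      L (LaurentPolynomial.T (-(m + (i : ℤ) - (j : ℤ)))) with hA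
  set U : Matrix (Fin (n+1)) (Fin (n+1)) ℂ :=
    Matrix.of fun k j : Fin (n+1) => (szego α (j : ℕ)).coeff (k : ℕ) with hUdef
  set M : Matrix (Fin (n+1)) (Fin (n+1)) ℂ :=
    Matrix.of fun i j : Fin (n + 1) =>
      L (LaurentPolynomial.T (-(m + (i : ℤ))) * Polynomial.toLaurent (szego α (j : ℕ))) /
        ∏ k ∈ Finset.range (j : ℕ), ((1 - Complex.normSq (α k) : ℝ) : ℂ) with hM
  have key : ∀ (e : ℤ) (j : Fin (n+1)),
      L (LaurentPolynomial.T e * Polynomial.toLaurent (szego α (j : ℕ))) =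
        ∑ k ∈ Finset.range (n+1), (szego α (j : ℕ)).coeff k * L (LaurentPolynomial.T (e + k)) := by
    intro e j
    have hdeg : (szego α (j : ℕ)).natDegree < n + 1 := by
      rw [(szego_monic_natDegree α (j : ℕ)).2]; exact j.2
    conv_lhs => rw [Polynomial.as_sum_range' _ _ hdeg]
    rw [map_sum, Finset.mul_sum, map_sum]
    refine Finset.sum_congr rfl fun k _ => ?_
    rw [Polynomial.toLaurent_C_mul_T]
    have : LaurentPolynomial.T e * (LaurentPolynomial.C ((szego α (j : ℕ)).coeff k) *
        LaurentPolynomial.T (k : ℤ)) =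
        LaurentPolynomial.C ((szego α (j : ℕ)).coeff k) * LaurentPolynomial.T (e + k) := by
      rw [LaurentPolynomial.T_add]
      ring
    rw [this, LaurentPolynomial.C_eq_algebraMap, ← Algebra.smul_def, map_smul, smul_eq_mul]
  have hAU : A * U = Matrix.of fun i j => d j * M i j := by
    ext i j
    rw [Matrix.mul_apply]
    have hrhs : (Matrix.of fun i j => d j * M i j) i j =
        L (LaurentPolynomial.T (-(m + (i : ℤ))) * Polynomial.toLaurent (szego α (j : ℕ))) := by
      simp only [Matrix.of_apply, hM]
      rw [mul_comm, div_mul_cancel₀ _ (hdne j)]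
    rw [hrhs, key (-(m + (i : ℤ))) j, ← Fin.sum_univ_eq_sum_range
      (fun k => (szego α (j : ℕ)).coeff k * L (LaurentPolynomial.T (-(m + (i : ℤ)) + k)))]
    refine Finset.sum_congr rfl fun k _ => ?_
    simp only [hA, hUdef, Matrix.of_apply]
    rw [mul_comm]
    congr 2
    ring
  have hU : U.det = 1 := by
    rw [Matrix.det_of_upperTriangular]
    · refine Finset.prod_eq_one fun j _ => ?_
      show (szego α (j : ℕ)).coeff (j : ℕ) = 1
      have h := szego_monic_natDegree α (j : ℕ)
      have h1 := h.1
      rw [Polynomial.Monic.def, Polynomial.leadingCoeff, h.2] at h1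
      exact h1
    · intro i j hij
      show (szego α (j : ℕ)).coeff (i : ℕ) = 0
      refine Polynomial.coeff_eq_zero_of_natDegree_lt ?_
      rw [(szego_monic_natDegree α (j : ℕ)).2]
      exact_mod_cast hij
  have hprodd : (∏ j : Fin (n+1), d j) =
      ∏ k ∈ Finset.range n, ((1 - Complex.normSq (α k) : ℝ) : ℂ) ^ (n - k) := by
    rw [show (∏ j : Fin (n+1), d j) = ∏ j ∈ Finset.range (n+1), ∏ k ∈ Finset.range j, c k from
      Fin.prod_univ_eq_prod_range (fun j => ∏ k ∈ Finset.range j, c k) (n+1),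
      prod_prod_range c n]
  calc A.det = (A * U).det := by rw [Matrix.det_mul, hU, mul_one]
    _ = (Matrix.of fun i j => d j * M i j).det := by rw [hAU]
    _ = (∏ j, d j) * M.det := Matrix.det_mul_row d M
    _ = _ := by rw [hprodd]


end
end

section
/- For every nonnegative integer n, the determinant of the Toeplitz matrix (μ_{i-j})_{0≤i,j≤n} equals ∏_{k=0}^{n-1}(1-|α_k|²)^{n-k}, where the empty product (n = 0) is interpreted as 1. -/
open Polynomial LaurentPolynomial Finset

noncomputable section

lemma OPUCaux.reflect_sum' (N : ℕ) (s : Finset ℕ) (f : ℕ → Polynomial ℂ) :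
    Polynomial.reflect N (∑ i ∈ s, f i) = ∑ i ∈ s, Polynomial.reflect N (f i) :=
  map_sum (AddMonoidHom.mk' (Polynomial.reflect N) (fun a b => Polynomial.reflect_add a b N)) f s

lemma OPUCaux.toLaurent_reflect (p : Polynomial ℂ) (N : ℕ) (h : p.natDegree ≤ N) :
    Polynomial.toLaurent (Polynomial.reflect N p)
      = LaurentPolynomial.T (N : ℤ) * LaurentPolynomial.invert (Polynomial.toLaurent p) := by
  conv_lhs => rw [p.as_sum_support]
  conv_rhs => rw [p.as_sum_support]
  rw [OPUCaux.reflect_sum', map_sum, map_sum, map_sum, Finset.mul_sum]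
  refine Finset.sum_congr rfl fun i hi => ?_
  have hiN : i ≤ N := (p.le_natDegree_of_mem_supp i hi).trans h
  rw [← Polynomial.C_mul_X_pow_eq_monomial, Polynomial.reflect_C_mul_X_pow,
    Polynomial.revAt_le hiN, Polynomial.toLaurent_C_mul_X_pow, Polynomial.toLaurent_C_mul_X_pow,
    map_mul, LaurentPolynomial.invert_C, LaurentPolynomial.invert_T]
  rw [mul_comm (LaurentPolynomial.T (N:ℤ)), mul_assoc, ← LaurentPolynomial.T_add]
  congr 2
  omega

lemma OPUCaux.polyBarInv_eq (p : Polynomial ℂ) :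
    polyBarInv p = LaurentPolynomial.invert (Polynomial.toLaurent (p.map (starRingEnd ℂ))) := by
  conv_rhs => rw [p.as_sum_support]
  rw [polyBarInv, Polynomial.sum, Polynomial.map_sum, map_sum, map_sum]
  refine Finset.sum_congr rfl fun i hi => ?_
  rw [Polynomial.map_monomial, ← Polynomial.C_mul_X_pow_eq_monomial,
    Polynomial.toLaurent_C_mul_X_pow, map_mul, LaurentPolynomial.invert_C,
    LaurentPolynomial.invert_T]

namespace OPUCaux

variable (α : ℕ → ℂ)

lemma szego_zero : szego α 0 = 1 := rfl

lemma szego_succ (n : ℕ) : szego α (n+1) =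
    Polynomial.X * szego α n -
      Polynomial.C ((starRingEnd ℂ) (α n)) *
        Polynomial.reflect n ((szego α n).map (starRingEnd ℂ)) := rfl

lemma natDegree_reflect_le (q : Polynomial ℂ) (N : ℕ) (h : q.natDegree ≤ N) :
    (Polynomial.reflect N q).natDegree ≤ N := by
  rw [Polynomial.natDegree_le_iff_coeff_eq_zero]
  intro M hM
  rw [Polynomial.coeff_reflect, Polynomial.revAt_eq_self_of_lt hM]
  exact Polynomial.coeff_eq_zero_of_natDegree_lt (lt_of_le_of_lt h hM)

lemma natDegree_szego_le (n : ℕ) : (szego α n).natDegree ≤ n := by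
  induction n with
  | zero => simp [szego_zero]
  | succ n ih =>
    rw [szego_succ]
    refine (Polynomial.natDegree_sub_le _ _).trans (max_le ?_ ?_)
    · refine (Polynomial.natDegree_mul_le).trans ?_
      rw [Polynomial.natDegree_X]
      omega
    · refine (Polynomial.natDegree_mul_le).trans ?_
      have h1 : ((szego α n).map (starRingEnd ℂ)).natDegree ≤ n :=
        (Polynomial.natDegree_map_le).trans ih
      have := natDegree_reflect_le ((szego α n).map (starRingEnd ℂ)) n h1
      simp only [Polynomial.natDegree_C, zero_add]
      omega

lemma coeff_szego_self (n : ℕ) : (szego α n).coeff n = 1 := by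
  induction n with
  | zero => simp [szego_zero]
  | succ n ih =>
    rw [szego_succ]
    have h1 : ((szego α n).map (starRingEnd ℂ)).natDegree ≤ n :=
      (Polynomial.natDegree_map_le).trans (natDegree_szego_le α n)
    have h2 : (Polynomial.reflect n ((szego α n).map (starRingEnd ℂ))).natDegree < n + 1 :=
      Nat.lt_succ_of_le (natDegree_reflect_le _ n h1)
    rw [Polynomial.coeff_sub, Polynomial.coeff_X_mul, ih, Polynomial.coeff_C_mul,
      Polynomial.coeff_eq_zero_of_natDegree_lt h2]
    ring

lemma coeff_szego_eq_zero {n k : ℕ} (h : n < k) : (szego α n).coeff k = 0 :=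
  Polynomial.coeff_eq_zero_of_natDegree_lt (lt_of_le_of_lt (natDegree_szego_le α n) h)

lemma szegoL_succ (n : ℕ) :
    Polynomial.toLaurent (szego α (n+1))
      = LaurentPolynomial.T 1 * Polynomial.toLaurent (szego α n)
        - LaurentPolynomial.C ((starRingEnd ℂ) (α n))
            * (LaurentPolynomial.T (n : ℤ) * polyBarInv (szego α n)) := by
  rw [szego_succ, map_sub, map_mul, map_mul, Polynomial.toLaurent_X, Polynomial.toLaurent_C,
    OPUCaux.toLaurent_reflect _ n ((Polynomial.natDegree_map_le).trans (natDegree_szego_le α n)),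
    OPUCaux.polyBarInv_eq]

lemma conj_conj_comp : (starRingEnd ℂ).comp (starRingEnd ℂ) = RingHom.id ℂ := by
  ext x; simp

lemma barInv_szego_succ (n : ℕ) :
    polyBarInv (szego α (n+1))
      = LaurentPolynomial.T (-1) * polyBarInv (szego α n)
        - LaurentPolynomial.C (α n)
            * (LaurentPolynomial.T (-(n : ℤ)) * Polynomial.toLaurent (szego α n)) := by
  rw [OPUCaux.polyBarInv_eq, szego_succ, Polynomial.map_sub, Polynomial.map_mul, Polynomial.map_mul, Polynomial.map_X,
    Polynomial.map_C, ← Polynomial.reflect_map, Polynomial.map_map, conj_conj_comp,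
    Polynomial.map_id]
  rw [map_sub, map_mul, map_mul, Polynomial.toLaurent_X, Polynomial.toLaurent_C,
    OPUCaux.toLaurent_reflect _ n (natDegree_szego_le α n)]
  rw [map_sub, map_mul, map_mul, map_mul, LaurentPolynomial.invert_T,
    LaurentPolynomial.invert_C, LaurentPolynomial.invert_T,
    LaurentPolynomial.involutive_invert (Polynomial.toLaurent (szego α n))]
  rw [OPUCaux.polyBarInv_eq]
  simp

lemma L_C_mul (L : LaurentPolynomial ℂ →ₗ[ℂ] ℂ) (a : ℂ) (f : LaurentPolynomial ℂ) :
    L (LaurentPolynomial.C a * f) = a * L f := by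
  rw [LaurentPolynomial.C_eq_algebraMap, ← Algebra.smul_def, map_smul, smul_eq_mul]

lemma L_expand (L : LaurentPolynomial ℂ →ₗ[ℂ] ℂ) (f g : LaurentPolynomial ℂ) (a : ℂ)
    (m k1 k2 : ℤ) :
    L (LaurentPolynomial.T m * (LaurentPolynomial.T k1 * f
        - LaurentPolynomial.C a * (LaurentPolynomial.T k2 * g)))
      = L (LaurentPolynomial.T (m + k1) * f) - a * L (LaurentPolynomial.T (m + k2) * g) := by
  rw [mul_sub, ← mul_assoc, ← LaurentPolynomial.T_add, mul_left_comm (LaurentPolynomial.T m),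
    ← mul_assoc (LaurentPolynomial.T m), ← LaurentPolynomial.T_add, map_sub, L_C_mul]


def cst (α : ℕ → ℂ) (j : ℕ) : ℂ := ((1 - Complex.normSq (α j) : ℝ) : ℂ)

def kap (α : ℕ → ℂ) (s : ℕ) : ℂ := ∏ j ∈ Finset.range s, cst α j

lemma cst_eq (j : ℕ) : cst α j = 1 - α j * (starRingEnd ℂ) (α j) := by
  rw [cst, Complex.ofReal_sub, Complex.ofReal_one, Complex.mul_conj]

lemma kap_succ (n : ℕ) : kap α (n+1) = kap α n * cst α n := Finset.prod_range_succ _ _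

lemma ortho (L : LaurentPolynomial ℂ →ₗ[ℂ] ℂ) (hL1 : L 1 = 1)
    (hLphi : ∀ k : ℕ, 1 ≤ k → L (Polynomial.toLaurent (szego α k)) = 0)
    (hLbar : ∀ k : ℕ, 1 ≤ k → L (polyBarInv (szego α k)) = 0) :
    ∀ n : ℕ,
      (∀ m : ℤ, -(n:ℤ) < m → m ≤ 0 →
        L (LaurentPolynomial.T m * Polynomial.toLaurent (szego α n)) = 0) ∧
      (∀ m : ℤ, 0 ≤ m → m < (n:ℤ) →
        L (LaurentPolynomial.T m * polyBarInv (szego α n)) = 0) ∧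
      L (LaurentPolynomial.T (-(n:ℤ)) * Polynomial.toLaurent (szego α n)) = kap α n ∧
      L (LaurentPolynomial.T (n:ℤ) * polyBarInv (szego α n)) = kap α n := by
  intro n
  induction n with
  | zero =>
    have h1 : Polynomial.toLaurent (szego α 0) = 1 := by rw [szego_zero]; exact map_one _
    have h2 : polyBarInv (szego α 0) = 1 := by
      rw [OPUCaux.polyBarInv_eq, szego_zero, Polynomial.map_one, map_one, map_one]
    refine ⟨fun m hm1 hm2 => absurd (lt_of_lt_of_le hm1 hm2) (by omega), fun m hm1 hm2 => ?_, ?_, ?_⟩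
    · omega
    · simp only [Nat.cast_zero, neg_zero, LaurentPolynomial.T_zero, one_mul, h1, hL1, kap,
        Finset.range_zero, Finset.prod_empty]
    · simp only [Nat.cast_zero, LaurentPolynomial.T_zero, one_mul, h2, hL1, kap,
        Finset.range_zero, Finset.prod_empty]
  | succ n ih =>
    obtain ⟨P, Q, R, S⟩ := ih
    -- expansion identities
    have LA : ∀ m : ℤ, L (LaurentPolynomial.T m * Polynomial.toLaurent (szego α (n+1)))
        = L (LaurentPolynomial.T (m + 1) * Polynomial.toLaurent (szego α n))
          - (starRingEnd ℂ) (α n) *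
            L (LaurentPolynomial.T (m + n) * polyBarInv (szego α n)) := by
      intro m
      rw [szegoL_succ, L_expand]
    have LB : ∀ m : ℤ, L (LaurentPolynomial.T m * polyBarInv (szego α (n+1)))
        = L (LaurentPolynomial.T (m - 1) * polyBarInv (szego α n))
          - α n * L (LaurentPolynomial.T (m - n) * Polynomial.toLaurent (szego α n)) := by
      intro m
      rw [barInv_szego_succ, L_expand, sub_eq_add_neg m 1, sub_eq_add_neg m (n:ℤ)]
    have hU : L (LaurentPolynomial.T (-1) * polyBarInv (szego α n)) = α n * kap α n := by
      have h0 := hLbar (n+1) (by omega)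
      rw [show polyBarInv (szego α (n+1)) = LaurentPolynomial.T 0 * polyBarInv (szego α (n+1))
        by rw [LaurentPolynomial.T_zero, one_mul]] at h0
      rw [LB 0, zero_sub, zero_sub, R, sub_eq_zero] at h0
      rw [h0]
    have hW : L (LaurentPolynomial.T 1 * Polynomial.toLaurent (szego α n))
        = (starRingEnd ℂ) (α n) * kap α n := by
      have h0 := hLphi (n+1) (by omega)
      rw [show Polynomial.toLaurent (szego α (n+1))
          = LaurentPolynomial.T 0 * Polynomial.toLaurent (szego α (n+1))
        by rw [LaurentPolynomial.T_zero, one_mul]] at h0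
      rw [LA 0, zero_add, zero_add, S, sub_eq_zero] at h0
      rw [h0]
    refine ⟨?_, ?_, ?_, ?_⟩
    · intro m hm1 hm2
      rcases eq_or_lt_of_le hm2 with h0 | hneg
      · subst h0
        rw [LaurentPolynomial.T_zero, one_mul]
        exact hLphi (n+1) (by omega)
      · rw [LA m, P (m+1) (by push_cast at hm1 ⊢; omega) (by omega),
          Q (m + n) (by push_cast at hm1 ⊢; omega) (by omega), mul_zero, sub_zero]
    · intro m hm1 hm2
      rcases eq_or_lt_of_le hm1 with h0 | hpos
      · subst h0
        rw [LaurentPolynomial.T_zero, one_mul]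
        exact hLbar (n+1) (by omega)
      · rw [LB m, Q (m-1) (by omega) (by push_cast at hm2 ⊢; omega),
          P (m - n) (by omega) (by push_cast at hm2 ⊢; omega), mul_zero, sub_zero]
    · rw [LA (-(↑(n+1):ℤ)),
        show (-(↑(n+1):ℤ) + 1) = -(n:ℤ) by push_cast; ring,
        show (-(↑(n+1):ℤ) + (n:ℤ)) = -1 by push_cast; ring,
        R, hU, kap_succ, cst_eq]
      ring
    · rw [LB (↑(n+1):ℤ),
        show ((↑(n+1):ℤ) - 1) = (n:ℤ) by push_cast; ring,
        show ((↑(n+1):ℤ) - (n:ℤ)) = 1 by push_cast; ring,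
        S, hW, kap_succ, cst_eq]
      ring


lemma barInv_as_range (i N : ℕ) (h : i < N) :
    polyBarInv (szego α i)
      = ∑ k ∈ Finset.range N,
          LaurentPolynomial.C ((starRingEnd ℂ) ((szego α i).coeff k))
            * LaurentPolynomial.T (-(k:ℤ)) := by
  rw [polyBarInv]
  exact Polynomial.sum_over_range' _ (fun n => by simp) N
    (lt_of_le_of_lt (natDegree_szego_le α i) h)

lemma prod_kap : ∀ n : ℕ,
    ∏ i ∈ Finset.range (n+1), kap α i = ∏ k ∈ Finset.range n, (cst α k) ^ (n - k) := by
  intro n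
  induction n with
  | zero => simp [kap]
  | succ n ih =>
    rw [Finset.prod_range_succ, ih]
    have : ∀ k ∈ Finset.range (n+1), cst α k ^ (n + 1 - k) = cst α k ^ (n - k) * cst α k := by
      intro k hk
      rw [Finset.mem_range] at hk
      rw [show n + 1 - k = (n - k) + 1 by omega, pow_succ]
    rw [Finset.prod_congr rfl this, Finset.prod_mul_distrib, Finset.prod_range_succ _ n,
      Nat.sub_self, pow_zero, mul_one, kap]

end OPUCaux

theorem det_toeplitz' (α : ℕ → ℂ)
    (L : LaurentPolynomial ℂ →ₗ[ℂ] ℂ) (hL1 : L 1 = 1)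
    (hLphi : ∀ k : ℕ, 1 ≤ k → L (Polynomial.toLaurent (szego α k)) = 0)
    (hLbar : ∀ k : ℕ, 1 ≤ k → L (polyBarInv (szego α k)) = 0)
    (n : ℕ) :
    (Matrix.of fun i j : Fin (n + 1) =>
        L (LaurentPolynomial.T (-((i : ℤ) - (j : ℤ))))).det =
      ∏ k ∈ Finset.range n, ((1 - Complex.normSq (α k) : ℝ) : ℂ) ^ (n - k) := by
  classical
  have H := OPUCaux.ortho α L hL1 hLphi hLbar
  set M : Matrix (Fin (n+1)) (Fin (n+1)) ℂ :=
    Matrix.of fun i j : Fin (n + 1) => L (LaurentPolynomial.T (-((i : ℤ) - (j : ℤ)))) with hM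
  set B : Matrix (Fin (n+1)) (Fin (n+1)) ℂ :=
    Matrix.of fun i k : Fin (n + 1) => (starRingEnd ℂ) ((szego α (i:ℕ)).coeff (k:ℕ)) with hB
  have hBdet : B.det = 1 := by
    rw [Matrix.det_of_lowerTriangular B (by
      intro i j hij
      have hij' : (i:ℕ) < (j:ℕ) := hij
      simp only [hB, Matrix.of_apply]
      rw [OPUCaux.coeff_szego_eq_zero α hij', map_zero])]
    refine Finset.prod_eq_one fun i _ => ?_
    simp only [hB, Matrix.of_apply]
    rw [OPUCaux.coeff_szego_self, map_one]
  have key : ∀ i j : Fin (n+1),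
      (B * M) i j = L (LaurentPolynomial.T ((j:ℕ):ℤ) * polyBarInv (szego α (i:ℕ))) := by
    intro i j
    rw [OPUCaux.barInv_as_range α (i:ℕ) (n+1) i.isLt, Finset.mul_sum, map_sum,
      Matrix.mul_apply,
      ← Fin.sum_univ_eq_sum_range (fun k => L (LaurentPolynomial.T ((j:ℕ):ℤ) *
          (LaurentPolynomial.C ((starRingEnd ℂ) ((szego α (i:ℕ)).coeff k)) *
            LaurentPolynomial.T (-(k:ℤ)))))]
    refine Finset.sum_congr rfl fun k _ => ?_
    simp only [hB, hM, Matrix.of_apply]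
    rw [mul_left_comm, ← LaurentPolynomial.T_add, OPUCaux.L_C_mul,
      show (-(((k:ℕ):ℤ) - ((j:ℕ):ℤ))) = ((j:ℕ):ℤ) + -((k:ℕ):ℤ) by ring]
  have htri : (B * M).BlockTriangular id := by
    intro i j hij
    rw [key]
    exact (H (i:ℕ)).2.1 ((j:ℕ):ℤ) (Int.ofNat_nonneg _) (by exact_mod_cast hij)
  have hdiag : ∀ i : Fin (n+1), (B * M) i i = OPUCaux.kap α (i:ℕ) := fun i => by
    rw [key]; exact (H (i:ℕ)).2.2.2
  have : M.det = ∏ i : Fin (n+1), OPUCaux.kap α (i:ℕ) := by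
    rw [← one_mul M.det, ← hBdet, ← Matrix.det_mul, Matrix.det_of_upperTriangular htri]
    exact Finset.prod_congr rfl fun i _ => hdiag i
  rw [this, Fin.prod_univ_eq_prod_range (fun i => OPUCaux.kap α i), OPUCaux.prod_kap]
  rfl


/-- the determinant of the Toeplitz matrix `(μ_{i-j})_{0≤i,j≤n}`
equals `∏_{k<n} (1-|α_k|²)^{n-k}`. -/
theorem det_toeplitz (α : ℕ → ℂ) (hα : ∀ k, ‖α k‖ < 1)
    (L : LaurentPolynomial ℂ →ₗ[ℂ] ℂ) (hL1 : L 1 = 1)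
    (hLphi : ∀ k : ℕ, 1 ≤ k → L (Polynomial.toLaurent (szego α k)) = 0)
    (hLbar : ∀ k : ℕ, 1 ≤ k → L (polyBarInv (szego α k)) = 0)
    (n : ℕ) :
    (Matrix.of fun i j : Fin (n + 1) =>
        L (LaurentPolynomial.T (-((i : ℤ) - (j : ℤ))))).det =
      ∏ k ∈ Finset.range n, ((1 - Complex.normSq (α k) : ℝ) : ℂ) ^ (n - k) :=
  det_toeplitz' α L hL1 hLphi hLbar n

end
end

section
/- For all nonnegative integers n, r, and s, the generalized moment μ_{n,r,s} equals the weight sum Σ_{p ∈ gMot((-r,r)→(2n-s,s))} wt_M(p) over all gentle Motzkin paths from (-r,r) to (2n-s,s). -/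
open Polynomial LaurentPolynomial Finset

noncomputable section

def szstar (α : ℕ → ℂ) (n : ℕ) : Polynomial ℂ :=
  Polynomial.reflect n ((szego α n).map (starRingEnd ℂ))

lemma szego_succ (α : ℕ → ℂ) (n : ℕ) :
    szego α (n+1) = Polynomial.X * szego α n - Polynomial.C ((starRingEnd ℂ) (α n)) * szstar α n := rfl

lemma szstar_zero (α : ℕ → ℂ) : szstar α 0 = 1 := by
  simp [szstar, szego]

lemma natDegree_reflect_le {p : Polynomial ℂ} {n : ℕ} (h : p.natDegree ≤ n) :
    (Polynomial.reflect n p).natDegree ≤ n := by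
  apply Polynomial.natDegree_le_iff_coeff_eq_zero.2
  intro i hi
  rw [Polynomial.coeff_reflect, Polynomial.revAt_eq_self_of_lt hi]
  exact Polynomial.coeff_eq_zero_of_natDegree_lt (lt_of_le_of_lt h hi)

lemma szstar_natDegree_le (α : ℕ → ℂ) (n : ℕ) (h : (szego α n).natDegree ≤ n) :
    (szstar α n).natDegree ≤ n :=
  natDegree_reflect_le (by simpa using h)

lemma szego_monic (α : ℕ → ℂ) (n : ℕ) : (szego α n).Monic ∧ (szego α n).natDegree = n := by
  induction n with
  | zero => constructor <;> simp [szego, Polynomial.monic_one]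
  | succ n ih =>
    obtain ⟨hm, hd⟩ := ih
    have h1 : (Polynomial.X * szego α n).Monic := (Polynomial.monic_X).mul hm
    have hdeg1 : (Polynomial.X * szego α n).natDegree = n + 1 := by
      rw [Polynomial.natDegree_X_mul hm.ne_zero, hd]
    have hdeg2 : (Polynomial.C ((starRingEnd ℂ) (α n)) * szstar α n).natDegree < n + 1 := by
      calc (Polynomial.C ((starRingEnd ℂ) (α n)) * szstar α n).natDegree
          ≤ (szstar α n).natDegree := Polynomial.natDegree_C_mul_le _ _
        _ ≤ n := szstar_natDegree_le α n hd.le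
        _ < n + 1 := Nat.lt_succ_self n
    rw [szego_succ]
    constructor
    · exact h1.sub_of_left (Polynomial.degree_lt_degree (by rw [hdeg1]; exact hdeg2))
    · rw [Polynomial.natDegree_sub_eq_left_of_natDegree_lt (by rwa [hdeg1]), hdeg1]

lemma reflect_reflect' {p : Polynomial ℂ} (n : ℕ) :
    Polynomial.reflect n (Polynomial.reflect n p) = p := by
  ext i
  rw [Polynomial.coeff_reflect, Polynomial.coeff_reflect, Polynomial.revAt_invol]

lemma reflect_X_mul {g : Polynomial ℂ} {n : ℕ} (h : g.natDegree ≤ n) :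
    Polynomial.reflect (n+1) (Polynomial.X * g) = Polynomial.reflect n g := by
  have : (n+1) = 1 + n := by ring
  rw [this, Polynomial.reflect_mul Polynomial.X g (by simp) h]
  have : Polynomial.reflect 1 (Polynomial.X : Polynomial ℂ) = 1 := by
    have := Polynomial.reflect_monomial 1 1 (R := ℂ)
    simpa using this
  rw [this, one_mul]

lemma reflect_reflect_succ {p : Polynomial ℂ} {n : ℕ} (h : p.natDegree ≤ n) :
    Polynomial.reflect (n+1) (Polynomial.reflect n p) = Polynomial.X * p := by
  have h2 : (Polynomial.reflect n p).natDegree ≤ n := natDegree_reflect_le h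
  have : (n+1) = 1 + n := by ring
  rw [this, ← one_mul (Polynomial.reflect n p),
    Polynomial.reflect_mul 1 (Polynomial.reflect n p) (by simp) h2, reflect_reflect']
  have : Polynomial.reflect 1 (1 : Polynomial ℂ) = Polynomial.X := by
    have := Polynomial.reflect_monomial 1 0 (R := ℂ)
    simpa using this
  rw [this]

lemma szstar_succ (α : ℕ → ℂ) (n : ℕ) :
    szstar α (n+1) = szstar α n - Polynomial.C (α n) * (Polynomial.X * szego α n) := by
  have hd : (szego α n).natDegree = n := (szego_monic α n).2
  have hmap : ((szego α (n+1)).map (starRingEnd ℂ)) =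
      Polynomial.X * ((szego α n).map (starRingEnd ℂ)) -
        Polynomial.C (α n) * ((szstar α n).map (starRingEnd ℂ)) := by
    rw [szego_succ]
    simp [Polynomial.map_mul, Polynomial.map_sub]
  have hstar_map : (szstar α n).map (starRingEnd ℂ) = Polynomial.reflect n (szego α n) := by
    rw [szstar, ← Polynomial.reflect_map]
    ext i
    simp [Polynomial.coeff_map]
  rw [szstar, hmap, Polynomial.reflect_sub, hstar_map, Polynomial.reflect_C_mul,
    reflect_X_mul (by rw [Polynomial.natDegree_map]; exact hd.le),
    reflect_reflect_succ hd.le, ← szstar]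

namespace OPUCAux

lemma C_mul_eq_smul (c : ℂ) (f : LaurentPolynomial ℂ) : LaurentPolynomial.C c * f = c • f := by
  rw [LaurentPolynomial.C_eq_algebraMap, ← Algebra.smul_def]

lemma laurentBarInv_zero : laurentBarInv 0 = 0 := by
  simp [laurentBarInv]

lemma laurentBarInv_single (k : ℤ) (c : ℂ) :
    laurentBarInv (AddMonoidAlgebra.single k c) =
      LaurentPolynomial.C ((starRingEnd ℂ) c) * LaurentPolynomial.T (-k) := by
  by_cases hc : c = 0
  · simp [hc, laurentBarInv]
  · rw [laurentBarInv, AddMonoidAlgebra.coeff_single, Finsupp.sum_single_index] <;> simp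

lemma laurentBarInv_add (f g : LaurentPolynomial ℂ) :
    laurentBarInv (f + g) = laurentBarInv f + laurentBarInv g := by
  unfold laurentBarInv
  rw [AddMonoidAlgebra.coeff_add]
  apply Finsupp.sum_add_index' <;> simp [add_mul]

lemma laurentBarInv_C_mul (c : ℂ) (f : LaurentPolynomial ℂ) :
    laurentBarInv (LaurentPolynomial.C c * f) =
      LaurentPolynomial.C ((starRingEnd ℂ) c) * laurentBarInv f := by
  induction f using AddMonoidAlgebra.induction with
  | zero => simp [laurentBarInv_zero]
  | single_add k c' f hk hc' ih =>
    rw [mul_add, laurentBarInv_add, laurentBarInv_add, ih, mul_add]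
    congr 1
    rw [C_mul_eq_smul, AddMonoidAlgebra.smul_single, laurentBarInv_single, laurentBarInv_single]
    simp [smul_eq_mul, map_mul, mul_assoc]

lemma laurentBarInv_T (n : ℤ) :
    laurentBarInv (LaurentPolynomial.T n : LaurentPolynomial ℂ) = LaurentPolynomial.T (-n) := by
  have : (LaurentPolynomial.T n : LaurentPolynomial ℂ) = AddMonoidAlgebra.single n (1 : ℂ) := by
    rw [LaurentPolynomial.single_eq_C_mul_T, map_one, one_mul]
  rw [this, laurentBarInv_single]
  simp

lemma laurentBarInv_T_mul (m : ℤ) (f : LaurentPolynomial ℂ) :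
    laurentBarInv (LaurentPolynomial.T m * f) =
      LaurentPolynomial.T (-m) * laurentBarInv f := by
  induction f using AddMonoidAlgebra.induction with
  | zero => simp [laurentBarInv_zero]
  | single_add k c f hk hc ih =>
    rw [mul_add, laurentBarInv_add, laurentBarInv_add, ih, mul_add]
    congr 1
    rw [LaurentPolynomial.single_eq_C_mul_T]
    have h1 : LaurentPolynomial.T m * (LaurentPolynomial.C c * LaurentPolynomial.T k)
        = LaurentPolynomial.C c * LaurentPolynomial.T (m + k) := by
      rw [LaurentPolynomial.T_add]; ring
    rw [h1, laurentBarInv_C_mul, laurentBarInv_C_mul, laurentBarInv_T, laurentBarInv_T,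
      neg_add, LaurentPolynomial.T_add]
    ring


lemma polyBarInv_add (p q : Polynomial ℂ) :
    polyBarInv (p + q) = polyBarInv p + polyBarInv q := by
  unfold polyBarInv
  apply Polynomial.sum_add_index <;> simp [add_mul]

lemma polyBarInv_monomial (n : ℕ) (a : ℂ) :
    polyBarInv (Polynomial.monomial n a) =
      LaurentPolynomial.C ((starRingEnd ℂ) a) * LaurentPolynomial.T (-(n : ℤ)) := by
  by_cases ha : a = 0
  · simp [ha, polyBarInv]
  · rw [polyBarInv, Polynomial.sum_monomial_index] <;> simp

lemma polyBarInv_zero : polyBarInv 0 = 0 := by simp [polyBarInv]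

lemma laurentBarInv_toLaurent (p : Polynomial ℂ) :
    laurentBarInv (Polynomial.toLaurent p) = polyBarInv p := by
  induction p using Polynomial.induction_on' with
  | add p q hp hq => rw [map_add, OPUCAux.laurentBarInv_add, hp, hq, polyBarInv_add]
  | monomial n a =>
    rw [polyBarInv_monomial]
    rw [Polynomial.toLaurent_C_mul_T, OPUCAux.laurentBarInv_C_mul, OPUCAux.laurentBarInv_T]

lemma toLaurent_reflect_conj {k : ℕ} {p : Polynomial ℂ} (h : p.natDegree ≤ k) :
    Polynomial.toLaurent (Polynomial.reflect k (p.map (starRingEnd ℂ))) =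
      LaurentPolynomial.T (k : ℤ) * polyBarInv p := by
  have key : ∀ (s : Finset ℕ) (f : ℕ → ℂ), (∀ i ∈ s, i ≤ k) →
      Polynomial.toLaurent (Polynomial.reflect k
          ((∑ i ∈ s, Polynomial.monomial i (f i)).map (starRingEnd ℂ))) =
        LaurentPolynomial.T (k : ℤ) * polyBarInv (∑ i ∈ s, Polynomial.monomial i (f i)) := by
    intro s
    induction s using Finset.induction with
    | empty => intro f _; simp [polyBarInv_zero]
    | insert x s' hx ih =>
      intro f hf
      rw [Finset.sum_insert hx, Polynomial.map_add, Polynomial.reflect_add, map_add,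
        polyBarInv_add, mul_add, ih f (fun i hi => hf i (Finset.mem_insert_of_mem hi))]
      congr 1
      have hxk : x ≤ k := hf x (Finset.mem_insert_self x s')
      rw [polyBarInv_monomial, Polynomial.map_monomial]
      have : Polynomial.reflect k (Polynomial.monomial x ((starRingEnd ℂ) (f x))) =
          Polynomial.monomial (k - x) ((starRingEnd ℂ) (f x)) := by
        rw [← Polynomial.C_mul_X_pow_eq_monomial, ← Polynomial.C_mul_X_pow_eq_monomial,
          Polynomial.reflect_C_mul_X_pow, Polynomial.revAt_le hxk]
      rw [this, Polynomial.toLaurent_C_mul_T]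
      rw [← mul_assoc]
      have : LaurentPolynomial.T (k:ℤ) * LaurentPolynomial.C ((starRingEnd ℂ) (f x)) =
          LaurentPolynomial.C ((starRingEnd ℂ) (f x)) * LaurentPolynomial.T (k:ℤ) := mul_comm _ _
      rw [this, mul_assoc, ← LaurentPolynomial.T_add]
      congr 2
      omega
  have hp := Polynomial.as_sum_support p
  calc Polynomial.toLaurent (Polynomial.reflect k (p.map (starRingEnd ℂ)))
      = Polynomial.toLaurent (Polynomial.reflect k
          ((∑ i ∈ p.support, Polynomial.monomial i (p.coeff i)).map (starRingEnd ℂ))) := by rw [← hp]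
    _ = LaurentPolynomial.T (k : ℤ) * polyBarInv (∑ i ∈ p.support, Polynomial.monomial i (p.coeff i)) := by
        apply key
        intro i hi
        exact le_trans (Polynomial.le_natDegree_of_mem_supp i hi) h
    _ = LaurentPolynomial.T (k : ℤ) * polyBarInv p := by rw [← hp]


def phi (α : ℕ → ℂ) (n : ℕ) : LaurentPolynomial ℂ := Polynomial.toLaurent (szego α n)

def sig (α : ℕ → ℂ) (n : ℕ) : LaurentPolynomial ℂ := Polynomial.toLaurent (szstar α n)

lemma sig_eq (α : ℕ → ℂ) (n : ℕ) :
    sig α n = LaurentPolynomial.T (n : ℤ) * polyBarInv (szego α n) :=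
  toLaurent_reflect_conj (szego_monic α n).2.le

lemma polyBarInv_szstar (α : ℕ → ℂ) (n : ℕ) :
    polyBarInv (szstar α n) = LaurentPolynomial.T (-(n : ℤ)) * phi α n := by
  have hrefl : Polynomial.reflect n ((szstar α n).map (starRingEnd ℂ)) = szego α n := by
    rw [szstar, ← Polynomial.reflect_map]
    have : ((szego α n).map (starRingEnd ℂ)).map (starRingEnd ℂ) = szego α n := by
      ext i; simp [Polynomial.coeff_map]
    rw [this, reflect_reflect']
  have hdeg : (szstar α n).natDegree ≤ n := szstar_natDegree_le α n (szego_monic α n).2.le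
  have := toLaurent_reflect_conj hdeg
  rw [hrefl] at this
  rw [← phi] at this
  have h2 := congrArg (fun x => LaurentPolynomial.T (-(n:ℤ)) * x) this
  rw [← mul_assoc, ← LaurentPolynomial.T_add] at h2
  simp at h2
  rw [← h2]
  ring

lemma phi_zero (α : ℕ → ℂ) : phi α 0 = 1 := by simp [phi, szego]

lemma sig_zero (α : ℕ → ℂ) : sig α 0 = 1 := by simp [sig, szstar_zero]

lemma phi_succ (α : ℕ → ℂ) (n : ℕ) :
    phi α (n+1) = LaurentPolynomial.T 1 * phi α n
      - LaurentPolynomial.C ((starRingEnd ℂ) (α n)) * sig α n := by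
  rw [phi, szego_succ, map_sub, map_mul, map_mul, Polynomial.toLaurent_X, Polynomial.toLaurent_C,
    phi, sig]

lemma sig_succ (α : ℕ → ℂ) (n : ℕ) :
    sig α (n+1) = sig α n - LaurentPolynomial.C (α n) * (LaurentPolynomial.T 1 * phi α n) := by
  rw [sig, szstar_succ, map_sub, map_mul, map_mul, Polynomial.toLaurent_X, Polynomial.toLaurent_C,
    phi, sig]

lemma normSq_cast (a : ℂ) : ((1 - Complex.normSq a : ℝ) : ℂ) = 1 - a * (starRingEnd ℂ) a := by
  push_cast
  rw [Complex.mul_conj]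

lemma phi_alt (α : ℕ → ℂ) (n : ℕ) :
    phi α (n+1) = LaurentPolynomial.C ((1 - Complex.normSq (α n) : ℝ) : ℂ) *
        (LaurentPolynomial.T 1 * phi α n)
      - LaurentPolynomial.C ((starRingEnd ℂ) (α n)) * sig α (n+1) := by
  rw [sig_succ, phi_succ, normSq_cast, map_sub, map_one, map_mul]
  ring

lemma sig_alt (α : ℕ → ℂ) (n : ℕ) :
    sig α (n+1) = LaurentPolynomial.C ((1 - Complex.normSq (α n) : ℝ) : ℂ) * sig α n
      - LaurentPolynomial.C (α n) * phi α (n+1) := by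
  rw [sig_succ, phi_succ, normSq_cast, map_sub, map_one, map_mul]
  ring


def kap (α : ℕ → ℂ) (k : ℕ) : ℂ := ∏ j ∈ Finset.range k, ((1 - Complex.normSq (α j) : ℝ) : ℂ)

lemma kap_succ (α : ℕ → ℂ) (k : ℕ) :
    kap α (k+1) = ((1 - Complex.normSq (α k) : ℝ) : ℂ) * kap α k := by
  rw [kap, kap, Finset.prod_range_succ]; ring

lemma kap_ne_zero (α : ℕ → ℂ) (hα : ∀ k, ‖α k‖ < 1) (k : ℕ) : kap α k ≠ 0 := by
  rw [kap]
  apply Finset.prod_ne_zero_iff.2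
  intro j _
  have h1 : Complex.normSq (α j) < 1 := by
    have := hα j
    rw [← Complex.sq_norm]
    nlinarith [norm_nonneg (α j)]
  simp only [ne_eq, Complex.ofReal_eq_zero]
  linarith

section Lfunc

variable (α : ℕ → ℂ) (L : LaurentPolynomial ℂ →ₗ[ℂ] ℂ)

lemma L_C_mul (c : ℂ) (f : LaurentPolynomial ℂ) :
    L (LaurentPolynomial.C c * f) = c * L f := by
  rw [C_mul_eq_smul, map_smul, smul_eq_mul]

def gg (j : ℤ) (k : ℕ) : ℂ := L (LaurentPolynomial.T (-j) * phi α k)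

def hh (j : ℤ) (k : ℕ) : ℂ := L (LaurentPolynomial.T (-j) * sig α k)

lemma gg_rec (j : ℤ) (k : ℕ) :
    gg α L j (k+1) = gg α L (j-1) k - (starRingEnd ℂ) (α k) * hh α L j k := by
  rw [gg, gg, hh, phi_succ, mul_sub, ← mul_assoc, ← LaurentPolynomial.T_add]
  have : -j + 1 = -(j-1) := by ring
  rw [this]
  have : LaurentPolynomial.T (-j) * (LaurentPolynomial.C ((starRingEnd ℂ) (α k)) * sig α k)
      = LaurentPolynomial.C ((starRingEnd ℂ) (α k)) * (LaurentPolynomial.T (-j) * sig α k) := by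
    ring
  rw [this, map_sub, L_C_mul]

lemma hh_rec (j : ℤ) (k : ℕ) :
    hh α L j (k+1) = hh α L j k - α k * gg α L (j-1) k := by
  rw [hh, hh, gg, sig_succ, mul_sub]
  have : LaurentPolynomial.T (-j) * (LaurentPolynomial.C (α k) * (LaurentPolynomial.T 1 * phi α k))
      = LaurentPolynomial.C (α k) * (LaurentPolynomial.T (-(j-1)) * phi α k) := by
    have : -(j - 1) = -j + 1 := by ring
    rw [this, LaurentPolynomial.T_add]
    ring
  rw [this, map_sub, L_C_mul]

variable (hL1 : L 1 = 1)
  (hLphi : ∀ k : ℕ, 1 ≤ k → L (Polynomial.toLaurent (szego α k)) = 0)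
  (hLbar : ∀ k : ℕ, 1 ≤ k → L (polyBarInv (szego α k)) = 0)

include hLphi in
lemma gg_zero_axiom (k : ℕ) (hk : 1 ≤ k) : gg α L 0 k = 0 := by
  rw [gg, neg_zero, LaurentPolynomial.T_zero, one_mul]
  exact hLphi k hk

include hLbar in
lemma hh_diag_axiom (k : ℕ) (hk : 1 ≤ k) : hh α L (k : ℤ) k = 0 := by
  rw [hh]
  have : LaurentPolynomial.T (-(k:ℤ)) * sig α k = polyBarInv (szego α k) := by
    rw [sig_eq, ← mul_assoc, ← LaurentPolynomial.T_add]
    simp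
  rw [this]
  exact hLbar k hk

include hLbar in
lemma hh_over (k : ℕ) : hh α L ((k : ℤ) + 1) k = α k * gg α L (k : ℤ) k := by
  have h := hh_rec α L ((k:ℤ)+1) k
  have h2 := hh_diag_axiom α L hLbar (k+1) (by omega)
  push_cast at h2
  rw [h2] at h
  have : (k : ℤ) + 1 - 1 = (k : ℤ) := by ring
  rw [this] at h
  linear_combination -h

include hLphi in
lemma gg_under (k : ℕ) : gg α L (-1) k = (starRingEnd ℂ) (α k) * hh α L 0 k := by
  have h := gg_rec α L 0 k
  rw [gg_zero_axiom α L hLphi (k+1) (by omega)] at h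
  norm_num at h
  linear_combination -h

include hL1 hLphi hLbar in
lemma orth (k : ℕ) :
    (∀ j : ℤ, 0 ≤ j → j < k → gg α L j k = 0) ∧ gg α L k k = kap α k ∧
      (∀ j : ℤ, 1 ≤ j → j ≤ k → hh α L j k = 0) ∧ hh α L 0 k = kap α k := by
  induction k with
  | zero =>
    refine ⟨by omega, ?_, by omega, ?_⟩ <;>
      simp [gg, hh, phi_zero, sig_zero, kap, hL1]
  | succ k ih =>
    obtain ⟨ha, hb, hc, hd⟩ := ih
    refine ⟨?_, ?_, ?_, ?_⟩
    · intro j hj0 hjk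
      rcases eq_or_lt_of_le hj0 with h0 | h1
      · rw [← h0]; exact gg_zero_axiom α L hLphi (k+1) (by omega)
      · rw [gg_rec]
        rcases eq_or_lt_of_le (by omega : j ≤ (k:ℤ)) with hjk' | hjk'
        · rw [hjk', ha (k-1) (by omega) (by omega)]
          have := hh_diag_axiom α L hLbar k
          rcases Nat.eq_zero_or_pos k with h | h
          · subst h; norm_num at hjk' ⊢; omega
          · rw [hjk'] at hjk' ⊢
            rw [this h]; ring
        · rw [ha (j-1) (by omega) (by omega), hc j (by omega) (by omega)]; ring
    · rw [gg_rec]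
      push_cast
      have : (k : ℤ) + 1 - 1 = (k : ℤ) := by ring
      rw [this, hb, hh_over α L hLbar k, hb, kap_succ, normSq_cast]
      ring
    · intro j hj1 hjk
      rcases eq_or_lt_of_le (by omega : j ≤ (k:ℤ)+1) with hj | hj
      · rw [hj]
        have := hh_diag_axiom α L hLbar (k+1) (by omega)
        push_cast at this
        exact this
      · rw [hh_rec, ha (j-1) (by omega) (by omega), hc j (by omega) (by omega)]; ring
    · rw [hh_rec, hd]
      have h01 : (0:ℤ) - 1 = -1 := by ring
      rw [h01, gg_under α L hLphi k, hd, kap_succ, normSq_cast]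
      ring


lemma L_expand (t : ℤ) (p : Polynomial ℂ) (f : LaurentPolynomial ℂ) :
    L (LaurentPolynomial.T t * Polynomial.toLaurent p * f) =
      ∑ i ∈ p.support, p.coeff i * L (LaurentPolynomial.T (t + i) * f) := by
  conv_lhs => rw [Polynomial.as_sum_support p]
  rw [map_sum]
  have : ∀ i ∈ p.support,
      LaurentPolynomial.T t * Polynomial.toLaurent (Polynomial.monomial i (p.coeff i)) * f
        = LaurentPolynomial.C (p.coeff i) * (LaurentPolynomial.T (t + i) * f) := by
    intro i _
    rw [Polynomial.toLaurent_C_mul_T, LaurentPolynomial.T_add]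
    ring
  rw [Finset.mul_sum, Finset.sum_mul, map_sum]
  apply Finset.sum_congr rfl
  intro i hi
  rw [this i hi, L_C_mul]

lemma szego_supp_le (k : ℕ) {i : ℕ} (hi : i ∈ (szego α k).support) : i ≤ k := by
  have := Polynomial.le_natDegree_of_mem_supp i hi
  rwa [(szego_monic α k).2] at this

lemma szstar_supp_le (k : ℕ) {i : ℕ} (hi : i ∈ (szstar α k).support) : i ≤ k := by
  have := Polynomial.le_natDegree_of_mem_supp i hi
  exact le_trans this (szstar_natDegree_le α k (szego_monic α k).2.le)

lemma szstar_coeff_zero (k : ℕ) : (szstar α k).coeff 0 = 1 := by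
  rw [szstar, Polynomial.coeff_reflect]
  have : Polynomial.revAt k 0 = k := by rw [Polynomial.revAt_le (Nat.zero_le k)]; omega
  rw [this, Polynomial.coeff_map]
  have hm := (szego_monic α k).1
  have hd := (szego_monic α k).2
  rw [Polynomial.Monic, Polynomial.leadingCoeff, hd] at hm
  rw [hm, map_one]

include hL1 hLphi hLbar in
lemma base_even (s b : ℕ) (t : ℤ) (h2 : 2 * t + s + b = 0) :
    L (LaurentPolynomial.T t * (phi α s * sig α b)) =
      (if b = s then kap α s else 0) := by
  obtain ⟨ha, hb, hc, hd⟩ := orth α L hL1 hLphi hLbar s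
  rcases lt_trichotomy b s with hbs | hbs | hbs
  · -- b < s : expand sig b
    have : LaurentPolynomial.T t * (phi α s * sig α b)
        = LaurentPolynomial.T t * Polynomial.toLaurent (szstar α b) * phi α s := by
      rw [sig]; ring
    rw [this, L_expand]
    rw [if_neg (by omega)]
    apply Finset.sum_eq_zero
    intro i hi
    have hik := szstar_supp_le α b hi
    have : LaurentPolynomial.T (t + i) * phi α s = LaurentPolynomial.T (-(-(t + i))) * phi α s := by
      norm_num
    rw [this, ← gg, ha (-(t+i)) (by omega) (by omega)]
    ring
  · -- b = s : expand sig s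
    subst hbs
    have : LaurentPolynomial.T t * (phi α b * sig α b)
        = LaurentPolynomial.T t * Polynomial.toLaurent (szstar α b) * phi α b := by
      rw [sig]; ring
    rw [this, L_expand, if_pos rfl]
    have hsum : ∀ i ∈ (szstar α b).support,
        (szstar α b).coeff i * L (LaurentPolynomial.T (t + i) * phi α b)
          = if i = 0 then kap α b else 0 := by
      intro i hi
      have hik := szstar_supp_le α b hi
      have hrw : LaurentPolynomial.T (t + i) * phi α b
          = LaurentPolynomial.T (-(-(t + i))) * phi α b := by norm_num
      by_cases h0 : i = 0
      · subst h0
        rw [if_pos rfl, hrw, ← gg]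
        have : -(t + (0:ℕ)) = (b : ℤ) := by push_cast; omega
        rw [this, hb, szstar_coeff_zero, one_mul]
      · rw [if_neg h0, hrw, ← gg, ha (-(t+i)) (by omega) (by omega)]
        ring
    rw [Finset.sum_congr rfl hsum, Finset.sum_ite_eq' (szstar α b).support 0 (fun _ => kap α b)]
    rw [if_pos]
    rw [Polynomial.mem_support_iff, szstar_coeff_zero]
    exact one_ne_zero
  · -- b > s : expand phi s
    obtain ⟨_, _, hcb, _⟩ := orth α L hL1 hLphi hLbar b
    have : LaurentPolynomial.T t * (phi α s * sig α b)
        = LaurentPolynomial.T t * Polynomial.toLaurent (szego α s) * sig α b := by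
      rw [phi]; ring
    rw [this, L_expand, if_neg (by omega)]
    apply Finset.sum_eq_zero
    intro i hi
    have hik := szego_supp_le α s hi
    have hrw : LaurentPolynomial.T (t + i) * sig α b
        = LaurentPolynomial.T (-(-(t + i))) * sig α b := by norm_num
    rw [hrw, ← hh, hcb (-(t+i)) (by omega) (by omega)]
    ring

include hL1 hLphi hLbar in
lemma base_odd (s b : ℕ) (t : ℤ) (h2 : 2 * t + s + b = 1) :
    L (LaurentPolynomial.T t * (phi α s * phi α b)) = 0 := by
  obtain ⟨ha, hb, hc, hd⟩ := orth α L hL1 hLphi hLbar s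
  obtain ⟨hab, _, _, _⟩ := orth α L hL1 hLphi hLbar b
  rcases lt_trichotomy b s with hbs | hbs | hbs
  · -- b < s : expand phi b
    have : LaurentPolynomial.T t * (phi α s * phi α b)
        = LaurentPolynomial.T t * Polynomial.toLaurent (szego α b) * phi α s := by
      simp only [phi]; ring
    rw [this, L_expand]
    apply Finset.sum_eq_zero
    intro i hi
    have hik := szego_supp_le α b hi
    have hrw : LaurentPolynomial.T (t + i) * phi α s
        = LaurentPolynomial.T (-(-(t + i))) * phi α s := by norm_num
    rw [hrw, ← gg, ha (-(t+i)) (by omega) (by omega)]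
    ring
  · omega
  · -- b > s : expand phi s
    have : LaurentPolynomial.T t * (phi α s * phi α b)
        = LaurentPolynomial.T t * Polynomial.toLaurent (szego α s) * phi α b := by
      simp only [phi]; ring
    rw [this, L_expand]
    apply Finset.sum_eq_zero
    intro i hi
    have hik := szego_supp_le α s hi
    have hrw : LaurentPolynomial.T (t + i) * phi α b
        = LaurentPolynomial.T (-(-(t + i))) * phi α b := by norm_num
    rw [hrw, ← gg, hab (-(t+i)) (by omega) (by omega)]
    ring


end Lfunc




def SPath (p q : ℤ × ℤ) : Set (List (ℤ × ℤ)) := {l | IsLatticePath gentleStep p l q}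

def W (α : ℕ → ℂ) (p q : ℤ × ℤ) : ℂ := ∑ᶠ l ∈ SPath p q, pathWeight (wtMstep α) p l

lemma SPath_nil_mem {p q : ℤ × ℤ} : [] ∈ SPath p q ↔ (p = q ∧ 0 ≤ p.2) := Iff.rfl

lemma SPath_cons_mem {p q st : ℤ × ℤ} {rest : List (ℤ × ℤ)} :
    (st :: rest) ∈ SPath p q ↔
      (0 ≤ p.2 ∧ gentleStep p st ∧ IsLatticePath gentleStep (p + st) rest q) := Iff.rfl

lemma path_length {p q : ℤ × ℤ} {l : List (ℤ × ℤ)}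
    (h : IsLatticePath gentleStep p l q) : q.1 = p.1 + l.length := by
  induction l generalizing p with
  | nil => obtain ⟨h1, _⟩ := h; rw [h1]; simp
  | cons st rest ih =>
    obtain ⟨_, hst, hrest⟩ := h
    have h1 : st.1 = 1 := by
      rcases hst with ⟨h, _⟩ | h | ⟨h, _⟩ <;> rw [h]
    have := ih hrest
    simp only [Prod.fst_add, h1] at this
    simp [this]
    omega

lemma gentle_mem {p st : ℤ × ℤ} (h : gentleStep p st) :
    st ∈ ({(1,1), (1,0), (1,-1)} : Set (ℤ × ℤ)) := by
  rcases h with ⟨h, _⟩ | h | ⟨h, _⟩ <;> simp [h]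

lemma SPath_finite (p q : ℤ × ℤ) : (SPath p q).Finite := by
  have key : ∀ d : ℕ, ∀ p : ℤ × ℤ, q.1 - p.1 ≤ d → (SPath p q).Finite := by
    intro d
    induction d with
    | zero =>
      intro p hp
      apply Set.Finite.subset (Set.finite_singleton [])
      intro l hl
      have hl' : IsLatticePath gentleStep p l q := hl
      have := path_length hl'
      have : l.length = 0 := by omega
      simp [List.length_eq_zero_iff] at this
      simp [this]
    | succ d ih =>
      intro p hp
      by_cases hq : q.1 - p.1 ≤ 0
      · apply Set.Finite.subset (Set.finite_singleton [])
        intro l hl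
        have hl' : IsLatticePath gentleStep p l q := hl
        have := path_length hl'
        have : l.length = 0 := by omega
        simp [List.length_eq_zero_iff] at this
        simp [this]
      · have hsub : SPath p q ⊆
            ⋃ st ∈ ({(1,1), (1,0), (1,-1)} : Set (ℤ × ℤ)), (st :: ·) '' SPath (p + st) q := by
          intro l hl
          match l with
          | [] =>
            obtain ⟨h1, _⟩ := SPath_nil_mem.1 hl
            rw [h1] at hq; omega
          | st :: rest =>
            obtain ⟨_, hst, hrest⟩ := SPath_cons_mem.1 hl
            exact Set.mem_biUnion (gentle_mem hst) ⟨rest, hrest, rfl⟩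
        apply Set.Finite.subset _ hsub
        apply Set.Finite.biUnion (Set.toFinite _)
        intro st hst
        apply Set.Finite.image
        apply ih
        have : st.1 = 1 := by
          simp at hst
          rcases hst with h | h | h <;> subst h <;> rfl
        simp [Prod.fst_add, this]
        omega
  exact key (max (q.1 - p.1) 0).toNat p (by omega)

lemma W_end {α : ℕ → ℂ} {p q : ℤ × ℤ} (h : p.1 = q.1) :
    W α p q = if p = q ∧ 0 ≤ p.2 then 1 else 0 := by
  by_cases hpq : p = q ∧ 0 ≤ p.2
  · have : SPath p q = {[]} := by
      ext l
      constructor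
      · intro hl
        have hl' : IsLatticePath gentleStep p l q := hl
        have := path_length hl'
        have : l.length = 0 := by omega
        simpa [List.length_eq_zero_iff] using this
      · intro hl
        simp at hl
        subst hl
        exact SPath_nil_mem.2 ⟨hpq.1, hpq.2⟩
    rw [W, this, if_pos hpq]
    rw [finsum_mem_singleton]
    rfl
  · have : SPath p q = ∅ := by
      ext l
      simp only [Set.mem_empty_iff_false, iff_false]
      intro hl
      have hl' : IsLatticePath gentleStep p l q := hl
      have hlen := path_length hl'
      have : l.length = 0 := by omega
      rw [List.length_eq_zero_iff] at this
      subst this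
      exact hpq ⟨hl'.1, hl'.2⟩
    rw [W, this, if_neg hpq, finsum_mem_empty]

lemma W_past {α : ℕ → ℂ} {p q : ℤ × ℤ} (h : q.1 < p.1) : W α p q = 0 := by
  have : SPath p q = ∅ := by
    ext l
    simp only [Set.mem_empty_iff_false, iff_false]
    intro hl
    have hl' : IsLatticePath gentleStep p l q := hl
    have := path_length hl'
    omega
  rw [W, this, finsum_mem_empty]

lemma W_below {α : ℕ → ℂ} {p q : ℤ × ℤ} (h : p.2 < 0) : W α p q = 0 := by
  have : SPath p q = ∅ := by
    ext l
    simp only [Set.mem_empty_iff_false, iff_false]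
    intro hl
    match l with
    | [] => exact absurd (SPath_nil_mem.1 hl).2 (by omega)
    | st :: rest => exact absurd (SPath_cons_mem.1 hl).1 (by omega)
  rw [W, this, finsum_mem_empty]

lemma finsum_mem_const_mul {β : Type*} {S : Set β} (hS : S.Finite) (c : ℂ) (f : β → ℂ) :
    ∑ᶠ x ∈ S, c * f x = c * ∑ᶠ x ∈ S, f x := by
  rw [finsum_mem_eq_finite_toFinset_sum _ hS, finsum_mem_eq_finite_toFinset_sum _ hS,
    Finset.mul_sum]

lemma W_cons (α : ℕ → ℂ) (p q st : ℤ × ℤ) :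
    (∑ᶠ l ∈ (st :: ·) '' SPath (p + st) q, pathWeight (wtMstep α) p l)
      = wtMstep α p st * W α (p + st) q := by
  rw [finsum_mem_image (fun a _ b _ h => by simpa using h)]
  have : ∀ rest, pathWeight (wtMstep α) p (st :: rest)
      = wtMstep α p st * pathWeight (wtMstep α) (p + st) rest := fun rest => rfl
  rw [finsum_mem_congr rfl (fun rest _ => this rest),
    finsum_mem_const_mul (SPath_finite (p+st) q), W]

lemma W_split_even (α : ℕ → ℂ) {p q : ℤ × ℤ} (hx : p.1 < q.1) (hy : 0 ≤ p.2)
    (hev : Even (p.1 + p.2)) :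
    W α p q = W α (p + (1,1)) q + az α p.2 * W α (p + (1,0)) q := by
  have hset : SPath p q = ((((1,1) : ℤ × ℤ) :: ·) '' SPath (p + (1,1)) q) ∪
      ((((1,0) : ℤ × ℤ) :: ·) '' SPath (p + (1,0)) q) := by
    ext l
    constructor
    · intro hl
      match l with
      | [] =>
        obtain ⟨h1, _⟩ := SPath_nil_mem.1 hl
        rw [h1] at hx; omega
      | st :: rest =>
        obtain ⟨h0, hst, hrest⟩ := SPath_cons_mem.1 hl
        rcases hst with ⟨h, _⟩ | h | ⟨h, hodd⟩
        · subst h; exact Or.inl ⟨rest, hrest, rfl⟩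
        · subst h; exact Or.inr ⟨rest, hrest, rfl⟩
        · rw [← Int.not_even_iff_odd] at hodd; exact absurd hev hodd
    · intro hl
      rcases hl with ⟨rest, hrest, hfl⟩ | ⟨rest, hrest, hfl⟩ <;> subst hfl
      · exact SPath_cons_mem.2 ⟨hy, Or.inl ⟨rfl, hev⟩, hrest⟩
      · exact SPath_cons_mem.2 ⟨hy, Or.inr (Or.inl rfl), hrest⟩
  have hdisj : Disjoint ((((1,1) : ℤ × ℤ) :: ·) '' SPath (p + (1,1)) q)
      ((((1,0) : ℤ × ℤ) :: ·) '' SPath (p + (1,0)) q) := by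
    rw [Set.disjoint_left]
    rintro l ⟨r1, _, h1⟩ ⟨r2, _, h2⟩
    rw [← h1] at h2
    simp at h2
  rw [W, hset, finsum_mem_union hdisj ((SPath_finite _ _).image _) ((SPath_finite _ _).image _),
    W_cons, W_cons]
  have hw1 : wtMstep α p (1,1) = 1 := by simp [wtMstep]
  have hw2 : wtMstep α p (1,0) = az α p.2 := by
    rw [wtMstep, if_neg (by simp), if_neg (by simp), if_pos hev]
  rw [hw1, hw2, one_mul]

lemma W_split_odd (α : ℕ → ℂ) {p q : ℤ × ℤ} (hx : p.1 < q.1) (hy : 0 ≤ p.2)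
    (hodd : ¬ Even (p.1 + p.2)) :
    W α p q = (-(starRingEnd ℂ) (az α (p.2 - 1))) * W α (p + (1,0)) q +
      ((1 - Complex.normSq (az α (p.2 - 1)) : ℝ) : ℂ) * W α (p + (1,-1)) q := by
  have hset : SPath p q = ((((1,0) : ℤ × ℤ) :: ·) '' SPath (p + (1,0)) q) ∪
      ((((1,-1) : ℤ × ℤ) :: ·) '' SPath (p + (1,-1)) q) := by
    ext l
    constructor
    · intro hl
      match l with
      | [] =>
        obtain ⟨h1, _⟩ := SPath_nil_mem.1 hl
        rw [h1] at hx; omega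
      | st :: rest =>
        obtain ⟨h0, hst, hrest⟩ := SPath_cons_mem.1 hl
        rcases hst with ⟨h, hev⟩ | h | ⟨h, _⟩
        · exact absurd hev hodd
        · subst h; exact Or.inl ⟨rest, hrest, rfl⟩
        · subst h; exact Or.inr ⟨rest, hrest, rfl⟩
    · intro hl
      rcases hl with ⟨rest, hrest, hfl⟩ | ⟨rest, hrest, hfl⟩ <;> subst hfl
      · exact SPath_cons_mem.2 ⟨hy, Or.inr (Or.inl rfl), hrest⟩
      · exact SPath_cons_mem.2 ⟨hy, Or.inr (Or.inr ⟨rfl, Int.not_even_iff_odd.1 hodd⟩), hrest⟩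
  have hdisj : Disjoint ((((1,0) : ℤ × ℤ) :: ·) '' SPath (p + (1,0)) q)
      ((((1,-1) : ℤ × ℤ) :: ·) '' SPath (p + (1,-1)) q) := by
    rw [Set.disjoint_left]
    rintro l ⟨r1, _, h1⟩ ⟨r2, _, h2⟩
    rw [← h1] at h2
    simp at h2
  rw [W, hset, finsum_mem_union hdisj ((SPath_finite _ _).image _) ((SPath_finite _ _).image _),
    W_cons, W_cons]
  have hw1 : wtMstep α p (1,0) = -(starRingEnd ℂ) (az α (p.2 - 1)) := by
    rw [wtMstep, if_neg (by simp), if_neg (by simp), if_neg hodd]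
  have hw2 : wtMstep α p (1,-1) = ((1 - Complex.normSq (az α (p.2 - 1)) : ℝ) : ℂ) := by
    rw [wtMstep, if_neg (by simp), if_pos rfl]
  rw [hw1, hw2]

section Main

variable (α : ℕ → ℂ) (L : LaurentPolynomial ℂ →ₗ[ℂ] ℂ)
  (hL1 : L 1 = 1)
  (hLphi : ∀ k : ℕ, 1 ≤ k → L (Polynomial.toLaurent (szego α k)) = 0)
  (hLbar : ∀ k : ℕ, 1 ≤ k → L (polyBarInv (szego α k)) = 0)

include hL1 hLphi hLbar in
lemma main_claim (n s : ℕ) (d : ℕ) :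
    ∀ p : ℤ × ℤ, (2*(n:ℤ) - s) - p.1 = d → 0 ≤ p.2 →
    kap α s * W α p (2*(n:ℤ) - s, (s:ℤ)) =
      if Even (p.1 + p.2)
      then L (LaurentPolynomial.T ((p.1 - p.2)/2 - n) * (phi α s * sig α p.2.toNat))
      else L (LaurentPolynomial.T ((p.1 + 1 - p.2)/2 - n) * (phi α s * phi α p.2.toNat)) := by
  induction d with
  | zero =>
    intro p hd hy
    have hx : p.1 = 2*(n:ℤ) - s := by omega
    rw [W_end (by rw [hx])]
    by_cases hpq : p = (2*(n:ℤ) - s, (s:ℤ))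
    · rw [if_pos ⟨hpq, hy⟩, mul_one]
      have h2 : p.2 = (s:ℤ) := by rw [hpq]
      have hev : Even (p.1 + p.2) := by rw [Int.even_iff]; omega
      rw [if_pos hev]
      have hev' : (p.1 + p.2) % 2 = 0 := Int.even_iff.1 hev
      rw [base_even α L hL1 hLphi hLbar s p.2.toNat ((p.1 - p.2)/2 - n) (by omega)]
      rw [if_pos (by omega)]
    · rw [if_neg (by tauto), mul_zero]
      have hps : p.2 ≠ (s : ℤ) := by
        intro h
        exact hpq (Prod.ext hx h)
      by_cases hev : Even (p.1 + p.2)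
      · rw [if_pos hev]
        have hev' : (p.1 + p.2) % 2 = 0 := Int.even_iff.1 hev
        rw [base_even α L hL1 hLphi hLbar s p.2.toNat ((p.1 - p.2)/2 - n) (by omega)]
        rw [if_neg (by omega)]
      · rw [if_neg hev]
        have hev' : (p.1 + p.2) % 2 = 1 := Int.not_even_iff.1 hev
        rw [base_odd α L hL1 hLphi hLbar s p.2.toNat ((p.1 + 1 - p.2)/2 - n) (by omega)]
  | succ d ih =>
    intro p hd hy
    have hx : p.1 < 2*(n:ℤ) - s := by omega
    by_cases hev : Even (p.1 + p.2)
    · rw [if_pos hev, W_split_even α hx hy hev, mul_add]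
      have hev' : (p.1 + p.2) % 2 = 0 := Int.even_iff.1 hev
      have ih1 := ih (p + (1,1)) (by simp [Prod.fst_add]; omega) (by simp [Prod.snd_add]; omega)
      have ih2 := ih (p + (1,0)) (by simp [Prod.fst_add]; omega) (by simp [Prod.snd_add]; omega)
      have hev1 : Even ((p + (1,1)).1 + (p + (1,1)).2) := by
        simp only [Prod.fst_add, Prod.snd_add]; rw [Int.even_iff]; omega
      have hev2 : ¬ Even ((p + (1,0)).1 + (p + (1,0)).2) := by
        simp only [Prod.fst_add, Prod.snd_add]; rw [Int.not_even_iff]; omega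
      rw [if_pos hev1] at ih1
      rw [if_neg hev2] at ih2
      set b := p.2.toNat with hb
      set t := (p.1 - p.2)/2 - (n:ℤ) with ht
      have e1 : ((p + (1,1)).1 - (p + (1,1)).2)/2 - n = t := by
        simp only [Prod.fst_add, Prod.snd_add]; omega
      have e2 : (p + (1,1)).2.toNat = b + 1 := by
        simp only [Prod.snd_add]; omega
      have e3 : ((p + (1,0)).1 + 1 - (p + (1,0)).2)/2 - n = t + 1 := by
        simp only [Prod.fst_add, Prod.snd_add]; omega
      have e4 : (p + (1,0)).2.toNat = b := by
        simp only [Prod.snd_add]; omega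
      rw [e1, e2] at ih1
      rw [e3, e4] at ih2
      have haz : az α p.2 = α b := by rw [az, if_pos hy]
      have hring : LaurentPolynomial.T t * (phi α s * sig α b)
          = LaurentPolynomial.T t * (phi α s * sig α (b+1))
            + LaurentPolynomial.C (α b) * (LaurentPolynomial.T (t+1) * (phi α s * phi α b)) := by
        rw [sig_succ α b, LaurentPolynomial.T_add]
        ring
      have hLr : L (LaurentPolynomial.T t * (phi α s * sig α b))
          = L (LaurentPolynomial.T t * (phi α s * sig α (b+1)))
            + α b * L (LaurentPolynomial.T (t+1) * (phi α s * phi α b)) := by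
        rw [hring, map_add, L_C_mul]
      rw [haz]
      linear_combination ih1 + (α b) * ih2 - hLr
    · rw [if_neg hev, W_split_odd α hx hy hev, mul_add]
      have hev' : (p.1 + p.2) % 2 = 1 := Int.not_even_iff.1 hev
      have ih2 := ih (p + (1,0)) (by simp [Prod.fst_add]; omega) (by simp [Prod.snd_add]; omega)
      have hev2 : Even ((p + (1,0)).1 + (p + (1,0)).2) := by
        simp only [Prod.fst_add, Prod.snd_add]; rw [Int.even_iff]; omega
      rw [if_pos hev2] at ih2
      set b := p.2.toNat with hb
      set u := (p.1 + 1 - p.2)/2 - (n:ℤ) with hu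
      have e1 : ((p + (1,0)).1 - (p + (1,0)).2)/2 - n = u := by
        simp only [Prod.fst_add, Prod.snd_add]; omega
      have e2 : (p + (1,0)).2.toNat = b := by simp only [Prod.snd_add]; omega
      rw [e1, e2] at ih2
      rcases Nat.eq_zero_or_pos b with hb0 | hb1
      · have haz : az α (p.2 - 1) = -1 := by rw [az, if_neg (by omega)]
        have hW0 : W α (p + (1,-1)) (2*(n:ℤ) - s, (s:ℤ)) = 0 :=
          W_below (by simp only [Prod.snd_add]; omega)
        rw [hb0, sig_zero] at ih2
        rw [hb0, phi_zero, haz, hW0]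
        have h1 : -(starRingEnd ℂ) (-1 : ℂ) = 1 := by simp
        have h2 : ((1 - Complex.normSq (-1 : ℂ) : ℝ) : ℂ) = 0 := by simp [Complex.normSq]
        rw [h1, h2]
        linear_combination ih2
      · have hodd1 : ¬ Even ((p + (1,-1)).1 + (p + (1,-1)).2) := by
          simp only [Prod.fst_add, Prod.snd_add]; rw [Int.not_even_iff]; omega
        have ih3 := ih (p + (1,-1)) (by simp [Prod.fst_add]; omega)
          (by simp [Prod.snd_add]; omega)
        rw [if_neg hodd1] at ih3
        have e3 : ((p + (1,-1)).1 + 1 - (p + (1,-1)).2)/2 - n = u + 1 := by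
          simp only [Prod.fst_add, Prod.snd_add]; omega
        have e4 : (p + (1,-1)).2.toNat = b - 1 := by simp only [Prod.snd_add]; omega
        rw [e3, e4] at ih3
        have haz : az α (p.2 - 1) = α (b - 1) := by
          have hnat : (p.2 - 1).toNat = b - 1 := by omega
          rw [az, if_pos (by omega), hnat]
        have hbb : b - 1 + 1 = b := by omega
        have hring : LaurentPolynomial.T u * (phi α s * phi α b)
            = LaurentPolynomial.C ((1 - Complex.normSq (α (b-1)) : ℝ) : ℂ) *
                (LaurentPolynomial.T (u+1) * (phi α s * phi α (b-1)))
              - LaurentPolynomial.C ((starRingEnd ℂ) (α (b-1))) *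
                (LaurentPolynomial.T u * (phi α s * sig α b)) := by
          conv_lhs => rw [← hbb, phi_alt α (b-1), hbb]
          rw [LaurentPolynomial.T_add]
          ring
        have hLr : L (LaurentPolynomial.T u * (phi α s * phi α b))
            = ((1 - Complex.normSq (α (b-1)) : ℝ) : ℂ) *
                L (LaurentPolynomial.T (u+1) * (phi α s * phi α (b-1)))
              - (starRingEnd ℂ) (α (b-1)) *
                L (LaurentPolynomial.T u * (phi α s * sig α b)) := by
          rw [hring, map_sub, L_C_mul, L_C_mul]
        rw [haz]
        linear_combination (-(starRingEnd ℂ) (α (b-1))) * ih2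
          + ((1 - Complex.normSq (α (b-1)) : ℝ) : ℂ) * ih3 - hLr

include hL1 hLphi hLbar in
lemma base_far (n r s : ℕ) (h : 2*(n:ℤ) - s < -(r:ℤ)) :
    L (LaurentPolynomial.T (-(n:ℤ) - r) * (phi α s * sig α r)) = 0 := by
  obtain ⟨ha, _, _, _⟩ := orth α L hL1 hLphi hLbar s
  have hre : LaurentPolynomial.T (-(n:ℤ)-r) * (phi α s * sig α r)
      = LaurentPolynomial.T (-(n:ℤ)-r) * Polynomial.toLaurent (szstar α r) * phi α s := by
    simp only [sig]; ring
  rw [hre, L_expand]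
  apply Finset.sum_eq_zero
  intro i hi
  have hik := szstar_supp_le α r hi
  rw [show (-(n:ℤ)-r+i) = -((n:ℤ)+r-i) by ring, ← gg,
    ha ((n:ℤ)+r-i) (by omega) (by omega)]
  ring

lemma polyBarInv_szego (α : ℕ → ℂ) (r : ℕ) :
    polyBarInv (szego α r) = LaurentPolynomial.T (-(r:ℤ)) * sig α r := by
  rw [sig_eq, ← mul_assoc, ← LaurentPolynomial.T_add]
  simp

include hL1 hLphi hLbar in
lemma numerator_eq (n r s : ℕ) :
    L (Polynomial.toLaurent (szego α s) *
        laurentBarInv (LaurentPolynomial.T (n:ℤ) * Polynomial.toLaurent (szego α r)))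
      = L (LaurentPolynomial.T (-(n:ℤ) - r) * (phi α s * sig α r)) := by
  rw [laurentBarInv_T_mul, laurentBarInv_toLaurent, polyBarInv_szego]
  congr 1
  rw [show (-(n:ℤ) - r) = -(n:ℤ) + -(r:ℤ) by ring, LaurentPolynomial.T_add]
  simp only [phi]
  ring

end Main




end OPUCAux
open OPUCAux in
/-- the generalized moment `μ_{n,r,s}` equals the weight sum over
gentle Motzkin paths from `(-r,r)` to `(2n-s,s)`. -/
theorem genMom_eq_gentleMotzkin (α : ℕ → ℂ) (hα : ∀ k, ‖α k‖ < 1)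
    (L : LaurentPolynomial ℂ →ₗ[ℂ] ℂ) (hL1 : L 1 = 1)
    (hLphi : ∀ k : ℕ, 1 ≤ k → L (Polynomial.toLaurent (szego α k)) = 0)
    (hLbar : ∀ k : ℕ, 1 ≤ k → L (polyBarInv (szego α k)) = 0)
    (n r s : ℕ) :
    genMom L α n r s =
      ∑ᶠ p ∈ {l : List (ℤ × ℤ) |
          IsLatticePath gentleStep (-(r : ℤ), (r : ℤ)) l (2 * (n : ℤ) - s, (s : ℤ))},
        pathWeight (wtMstep α) (-(r : ℤ), (r : ℤ)) p := by
  have hknz := kap_ne_zero α hα s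
  have hRHS : (∑ᶠ p ∈ {l : List (ℤ × ℤ) |
          IsLatticePath gentleStep (-(r : ℤ), (r : ℤ)) l (2 * (n : ℤ) - s, (s : ℤ))},
        pathWeight (wtMstep α) (-(r : ℤ), (r : ℤ)) p)
      = W α (-(r:ℤ), (r:ℤ)) (2*(n:ℤ) - s, (s:ℤ)) := rfl
  rw [hRHS, genMom]
  have hden : (∏ j ∈ Finset.range s, ((1 - Complex.normSq (α j) : ℝ) : ℂ)) = kap α s := rfl
  rw [hden]
  have hnum := numerator_eq α L hL1 hLphi hLbar n r s
  rw [hnum]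
  rcases le_or_gt (-(r:ℤ)) (2*(n:ℤ) - s) with hle | hlt
  · have hclaim := main_claim α L hL1 hLphi hLbar n s (2*(n:ℤ) - s + r).toNat
      (-(r:ℤ), (r:ℤ)) (by simp only; omega) (by simp only; positivity)
    have hev : Even ((-(r:ℤ), (r:ℤ)).1 + (-(r:ℤ), (r:ℤ)).2) := by
      simp only
      rw [Int.even_iff]; omega
    rw [if_pos hev] at hclaim
    have he1 : (((-(r:ℤ), (r:ℤ)).1 - (-(r:ℤ), (r:ℤ)).2)/2 - (n:ℤ)) = -(n:ℤ) - r := by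
      simp only; omega
    have he2 : ((-(r:ℤ), (r:ℤ)).2).toNat = r := by simp only; omega
    rw [he1, he2] at hclaim
    rw [div_eq_iff hknz, ← hclaim]
    ring
  · rw [W_past (by simp only; omega)]
    rw [show (-(n:ℤ) - r) = -(n:ℤ) - r from rfl]
    rw [base_far α L hL1 hLphi hLbar n r s hlt]
    simp

end
end
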